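/- Let A(z), B(z), C(z) be arbitrary fields on a vector space M (no locality assumed). Then for all nonnegative integers p, r and every integer q: ∑_{i≥0} C(p,i) (A(z)_(r+i)B(z))_(p+q−i) C(z) = ∑_{i≥0} (−1)^i C(r,i) [ A(z)_(p+r−i)(B(z)_(q+i)C(z)) − (−1)^r B(z)_(q+r−i)(A(z)_(p+i)C(z)) ]. -/

import Mathlib

open Finset

section VA

variable {k M : Type*} [Field k] [CharZero k] [AddCommGroup M] [Module k M]

/-- Generalized binomial coefficient `C(n,i)` for `n : ℤ`, `i : ℕ`. -/
def ichoose (n : ℤ) (i : ℕ) : ℤ :=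
  if 0 ≤ n then (n.toNat.choose i : ℤ)
  else (-1) ^ i * ((((i : ℤ) - 1 - n).toNat.choose i : ℤ))

/-- `(-1)^m` for an integer `m`. -/
def msign (m : ℤ) : ℤ := if Even m then 1 else -1

/-- A series on `M`, given by its Fourier modes `A_n`. -/
abbrev Ser (M : Type*) : Type _ := ℤ → M → M

/-- `A(z)` is a field: modes applied to any vector vanish for large index. -/
def IsFieldSer (A : Ser M) : Prop := ∀ v : M, ∃ n₀ : ℤ, ∀ n ≥ n₀, A n v = 0

/-- All modes are `k`-linear, i.e. the coefficients are endomorphisms of the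
vector space `M`. -/
def IsLinSer (A : Ser M) : Prop := ∀ n : ℤ, IsLinearMap k (A n)

/-- Residual `m`-th product, in Fourier modes:
`(A_(m)B)_n = ∑_{i≥0} (-1)^i C(m,i) (A_{m-i} B_{n+i} - (-1)^m B_{m+n-i} A_i)`. -/
noncomputable def resProd (A B : Ser M) (m : ℤ) : Ser M := fun n v =>
  ∑ᶠ i : ℕ, ((-1 : ℤ) ^ i * ichoose m i) •
    (A (m - (i : ℤ)) (B (n + (i : ℤ)) v) - msign m • B (m + n - (i : ℤ)) (A (i : ℤ) v))

/-- Mutual locality at order `n`, in Fourier modes: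
`∑_{i=0}^n (-1)^i C(n,i) (A_{p+n-i} B_{q+i} - (-1)^n B_{q+n-i} A_{p+i}) = 0`. -/
def IsLocalAt (A B : Ser M) (n : ℕ) : Prop :=
  ∀ (p q : ℤ) (v : M),
    ∑ i ∈ Finset.range (n + 1), ((-1 : ℤ) ^ i * (n.choose i : ℤ)) •
      (A (p + (n : ℤ) - (i : ℤ)) (B (q + (i : ℤ)) v)
        - (-1 : ℤ) ^ n • B (q + (n : ℤ) - (i : ℤ)) (A (p + (i : ℤ)) v)) = 0

/-- `A` and `B` are mutually local of order exactly `n₀`. -/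
def HasOrder (A B : Ser M) (n₀ : ℕ) : Prop :=
  IsLocalAt A B n₀ ∧ ∀ n : ℕ, IsLocalAt A B n → n₀ ≤ n

/-- The identity field `I(z) = id`. -/
def idSer : Ser M := fun n v => if n = -1 then v else 0

/-- Derivative of a series: `(∂A)_n = -n A_{n-1}`. -/
def dSer (A : Ser M) : Ser M := fun n v => (-n) • A (n - 1) v

/-- Divided-power derivative: `(∂^{(i)}A)_n = (-1)^i C(n,i) A_{n-i}`. -/
def dpowSer (i : ℕ) (A : Ser M) : Ser M := fun n v =>
  ((-1 : ℤ) ^ i * ichoose n i) • A (n - (i : ℤ)) v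

/-- Normally ordered product `:A(z)B(z): = A(z)₋B(z) + B(z)A(z)₊`, in modes. -/
noncomputable def noProd (A B : Ser M) : Ser M := fun n v =>
  (∑ᶠ i : ℕ, A (-(i : ℤ) - 1) (B (n + (i : ℤ)) v)) + ∑ᶠ i : ℕ, B (n - 1 - (i : ℤ)) (A (i : ℤ) v)

/-- guarded generalized binomial with integer lower index -/
def ich (x m : ℤ) : ℤ := if 0 ≤ m then ichoose x m.toNat else 0

lemma ichoose_natCast (p i : ℕ) : ichoose (p : ℤ) i = (p.choose i : ℤ) := by
  simp [ichoose, Int.toNat_natCast]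

lemma ichoose_natCast_eq_zero {p i : ℕ} (h : p < i) : ichoose (p : ℤ) i = 0 := by
  rw [ichoose_natCast]; simp [Nat.choose_eq_zero_of_lt h]

lemma ichoose_zero_right (x : ℤ) : ichoose x 0 = 1 := by
  unfold ichoose; split_ifs <;> simp

lemma ichoose_succ (x : ℤ) (i : ℕ) :
    ichoose (x + 1) (i + 1) = ichoose x (i + 1) + ichoose x i := by
  unfold ichoose
  rcases lt_trichotomy x (-1) with hx | hx | hx
  · have e1 : ¬ (0 ≤ x + 1) := by omega
    have e2 : ¬ (0 ≤ x) := by omega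
    rw [if_neg e1, if_neg e2, if_neg e2]
    have h1 : (((i + 1 : ℕ) : ℤ) - 1 - (x + 1)).toNat = (((i : ℕ) : ℤ) - 1 - x).toNat := by
      push_cast; omega
    have h2 : (((i + 1 : ℕ) : ℤ) - 1 - x).toNat = (((i : ℕ) : ℤ) - 1 - x).toNat + 1 := by
      push_cast; omega
    rw [h1, h2, Nat.choose_succ_succ]
    push_cast; ring
  · subst hx
    have e1 : (0 : ℤ) ≤ -1 + 1 := by norm_num
    have e2 : ¬ ((0:ℤ) ≤ -1) := by norm_num
    rw [if_pos e1, if_neg e2, if_neg e2]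
    have h0 : ((-1 : ℤ) + 1).toNat = 0 := by norm_num
    have h2 : (((i + 1 : ℕ) : ℤ) - 1 - (-1)).toNat = i + 1 := by push_cast; omega
    have h3 : (((i : ℕ) : ℤ) - 1 - (-1)).toNat = i := by push_cast; omega
    rw [h0, h2, h3, Nat.choose_eq_zero_of_lt (by omega), Nat.choose_self, Nat.choose_self]
    push_cast; ring
  · have e1 : (0 : ℤ) ≤ x + 1 := by omega
    have e2 : (0 : ℤ) ≤ x := by omega
    rw [if_pos e1, if_pos e2, if_pos e2]
    have h1 : (x + 1).toNat = x.toNat + 1 := by omega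
    rw [h1, Nat.choose_succ_succ]
    push_cast; ring

lemma ich_coe (x : ℤ) (j : ℕ) : ich x (j : ℤ) = ichoose x j := by
  simp [ich, Int.toNat_natCast]

lemma ich_neg {x m : ℤ} (h : m < 0) : ich x m = 0 := by
  simp [ich, not_le.2 h]

lemma ich_zero (x : ℤ) : ich x 0 = 1 := by simp [ich, ichoose_zero_right]

lemma ich_pascal (x m : ℤ) : ich (x + 1) m = ich x m + ich x (m - 1) := by
  rcases lt_trichotomy m 0 with h | h | h
  · rw [ich_neg h, ich_neg h, ich_neg (by omega)]; ring
  · subst h; simp [ich_zero, ich_neg]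
  · obtain ⟨j, rfl⟩ : ∃ j : ℕ, m = (j : ℤ) + 1 := ⟨(m - 1).toNat, by omega⟩
    have h1 : ((j : ℤ) + 1) = ((j + 1 : ℕ) : ℤ) := by push_cast; ring
    have h2 : ((j : ℤ) + 1 - 1) = ((j : ℕ) : ℤ) := by push_cast; ring
    rw [h1]
    have h2 : ((j + 1 : ℕ) : ℤ) - 1 = ((j : ℕ) : ℤ) := by push_cast; ring
    rw [h2, ich_coe, ich_coe, ich_coe, ichoose_succ]

lemma msign_natCast (p : ℕ) : msign (p : ℤ) = (-1 : ℤ) ^ p := by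
  unfold msign
  rcases Nat.even_or_odd p with h | h
  · simp [h.neg_one_pow, Int.even_coe_nat, h]
  · simp [h.neg_one_pow, Int.even_coe_nat, Nat.not_even_iff_odd.2 h]

lemma msign_add (x y : ℤ) : msign (x + y) = msign x * msign y := by
  unfold msign
  by_cases hx : Even x <;> by_cases hy : Even y <;>
    simp [hx, hy, Int.even_add, *]

lemma msign_neg (x : ℤ) : msign (-x) = msign x := by
  unfold msign; simp

lemma msign_sub_natCast (x : ℤ) (i : ℕ) : msign (x - i) = msign x * (-1:ℤ) ^ i := by
  have : x - i = x + (-(i:ℤ)) := by ring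
  rw [this, msign_add, msign_neg, msign_natCast]

section AuxB
variable {Mz : Type*} [AddCommGroup Mz]

lemma pascal_smul_sum (p : ℕ) (F : ℕ → Mz) :
    ∑ i ∈ range (p + 2), ((p + 1).choose i : ℤ) • F i
      = ∑ i ∈ range (p + 1), (p.choose i : ℤ) • F i
        + ∑ i ∈ range (p + 1), (p.choose i : ℤ) • F (i + 1) := by
  rw [Finset.sum_range_succ' (fun i => ((p + 1).choose i : ℤ) • F i) (p + 1)]
  have h : ∀ t : ℕ, (((p + 1).choose (t + 1) : ℤ)) = (p.choose t : ℤ) + (p.choose (t + 1) : ℤ) := by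
    intro t; exact_mod_cast congrArg (Nat.cast (R := ℤ)) (Nat.choose_succ_succ p t)
  have e1 : ∑ i ∈ range (p + 1), ((p + 1).choose (i + 1) : ℤ) • F (i + 1)
      = ∑ i ∈ range (p + 1), (p.choose i : ℤ) • F (i + 1)
        + ∑ i ∈ range (p + 1), (p.choose (i + 1) : ℤ) • F (i + 1) := by
    rw [← Finset.sum_add_distrib]
    refine Finset.sum_congr rfl fun i _ => ?_
    rw [h i, add_smul]
  rw [e1]
  have e2 : ∑ i ∈ range (p + 1), (p.choose i : ℤ) • F i
      = ∑ i ∈ range p, (p.choose (i + 1) : ℤ) • F (i + 1) + (p.choose 0 : ℤ) • F 0 := by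
    rw [← Finset.sum_range_succ' (fun i => (p.choose i : ℤ) • F i) p]
  have e3 : ∑ i ∈ range (p + 1), (p.choose (i + 1) : ℤ) • F (i + 1)
      = ∑ i ∈ range p, (p.choose (i + 1) : ℤ) • F (i + 1) := by
    rw [Finset.sum_range_succ, Nat.choose_succ_self]
    simp
  rw [e3, e2]
  simp [Nat.choose_zero_right, Nat.choose_succ_self]
  abel

end AuxB

-- signed version specialized to ℤ with a (-1)^t twist
lemma alt_choose_succ (s : ℕ) (G : ℕ → ℤ) :
    ∑ t ∈ range (s + 2), (-1 : ℤ) ^ t * ((s + 1).choose t : ℤ) * G t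
      = ∑ t ∈ range (s + 1), (-1 : ℤ) ^ t * (s.choose t : ℤ) * G t
        - ∑ t ∈ range (s + 1), (-1 : ℤ) ^ t * (s.choose t : ℤ) * G (t + 1) := by
  have := pascal_smul_sum (Mz := ℤ) s (fun t => (-1 : ℤ) ^ t * G t)
  simp only [smul_eq_mul] at this
  calc ∑ t ∈ range (s + 2), (-1 : ℤ) ^ t * ((s + 1).choose t : ℤ) * G t
      = ∑ t ∈ range (s + 2), ((s + 1).choose t : ℤ) * ((-1 : ℤ) ^ t * G t) := by
        refine Finset.sum_congr rfl fun t _ => by ring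
    _ = ∑ t ∈ range (s + 1), (s.choose t : ℤ) * ((-1 : ℤ) ^ t * G t)
        + ∑ t ∈ range (s + 1), (s.choose t : ℤ) * ((-1 : ℤ) ^ (t + 1) * G (t + 1)) := this
    _ = _ := by
        rw [sub_eq_add_neg, ← Finset.sum_neg_distrib]
        congr 1
        · refine Finset.sum_congr rfl fun t _ => by ring
        · refine Finset.sum_congr rfl fun t _ => by rw [pow_succ]; ring

lemma ID1 (s : ℕ) : ∀ x J : ℤ,
    ∑ t ∈ range (s + 1), (-1 : ℤ) ^ t * (s.choose t : ℤ) * ich (x + (s : ℤ) - t) J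
      = ich x (J - s) := by
  induction s with
  | zero => intro x J; simp
  | succ s IH =>
    intro x J
    have A := alt_choose_succ s (fun t => ich (x + ((s + 1 : ℕ) : ℤ) - t) J)
    rw [A]
    have e1 : ∑ t ∈ range (s + 1), (-1 : ℤ) ^ t * (s.choose t : ℤ)
          * ich (x + ((s + 1 : ℕ) : ℤ) - t) J
        = ich (x + 1) (J - s) := by
      rw [← IH (x + 1) J]
      refine Finset.sum_congr rfl fun t _ => ?_
      congr 2
      push_cast; ring
    have e2 : ∑ t ∈ range (s + 1), (-1 : ℤ) ^ t * (s.choose t : ℤ)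
          * ich (x + ((s + 1 : ℕ) : ℤ) - (t + 1 : ℕ)) J
        = ich x (J - s) := by
      rw [← IH x J]
      refine Finset.sum_congr rfl fun t _ => ?_
      congr 2
      push_cast; ring
    rw [e1, e2]
    have := ich_pascal x (J - s)
    have e3 : J - ((s + 1 : ℕ) : ℤ) = J - s - 1 := by push_cast; ring
    rw [e3]
    omega

lemma ID2 (s : ℕ) : ∀ x J : ℤ,
    ∑ t ∈ range (s + 1), (-1 : ℤ) ^ t * (s.choose t : ℤ) * ich (x + (s : ℤ) - t) (J - t)
      = ich x J := by
  induction s with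
  | zero => intro x J; simp
  | succ s IH =>
    intro x J
    have A := alt_choose_succ s (fun t => ich (x + ((s + 1 : ℕ) : ℤ) - t) (J - t))
    rw [A]
    have e1 : ∑ t ∈ range (s + 1), (-1 : ℤ) ^ t * (s.choose t : ℤ)
          * ich (x + ((s + 1 : ℕ) : ℤ) - t) (J - t)
        = ich (x + 1) J := by
      rw [← IH (x + 1) J]
      refine Finset.sum_congr rfl fun t _ => ?_
      congr 2
      push_cast; ring
    have e2 : ∑ t ∈ range (s + 1), (-1 : ℤ) ^ t * (s.choose t : ℤ)
          * ich (x + ((s + 1 : ℕ) : ℤ) - (t + 1 : ℕ)) (J - (t + 1 : ℕ))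
        = ich x (J - 1) := by
      rw [← IH x (J - 1)]
      refine Finset.sum_congr rfl fun t _ => ?_
      have c1 : x + ((s + 1 : ℕ) : ℤ) - ((t + 1 : ℕ) : ℤ) = x + (s : ℤ) - t := by push_cast; ring
      have c2 : J - ((t + 1 : ℕ) : ℤ) = J - 1 - t := by push_cast; ring
      rw [c1, c2]
    rw [e1, e2]
    have := ich_pascal x J
    omega

section AuxTri
variable {Mz : Type*} [AddCommGroup Mz]

lemma refl_tri (m : ℕ) (g : ℕ → Mz) :
    ∑ l ∈ range (m + 1), g l = ∑ l ∈ range (m + 1), g (m - l) := by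
  refine Finset.sum_nbij' (fun l => m - l) (fun l => m - l) ?_ ?_ ?_ ?_ ?_
  · intro a ha; simp only [Finset.mem_range] at *; omega
  · intro a ha; simp only [Finset.mem_range] at *; omega
  · intro a ha; simp only [Finset.mem_range] at ha; omega
  · intro a ha; simp only [Finset.mem_range] at ha; omega
  · intro a ha; simp only [Finset.mem_range] at ha
    congr 1; omega

lemma tri1 (n : ℕ) (f : ℕ → ℕ → Mz) :
    ∑ i ∈ range (n + 1), ∑ l ∈ range (i + 1), f i l
      = ∑ a ∈ range (n + 1), ∑ t ∈ range (n + 1 - a), f (a + t) t := by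
  rw [Finset.sum_sigma', Finset.sum_sigma']
  refine Finset.sum_nbij' (fun x => ⟨x.1 - x.2, x.2⟩) (fun y => ⟨y.1 + y.2, y.2⟩) ?_ ?_ ?_ ?_ ?_
  · rintro ⟨i, l⟩ h
    simp only [Finset.mem_sigma, Finset.mem_range] at h ⊢
    omega
  · rintro ⟨a, t⟩ h
    simp only [Finset.mem_sigma, Finset.mem_range] at h ⊢
    omega
  · rintro ⟨i, l⟩ h
    simp only [Finset.mem_sigma, Finset.mem_range] at h
    dsimp only
    rw [Nat.sub_add_cancel (by omega)]
  · rintro ⟨a, t⟩ h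
    simp only [Finset.mem_sigma, Finset.mem_range] at h
    dsimp only
    rw [Nat.add_sub_cancel]
  · rintro ⟨i, l⟩ h
    simp only [Finset.mem_sigma, Finset.mem_range] at h
    dsimp only
    rw [Nat.sub_add_cancel (by omega)]

lemma tri2 (n : ℕ) (f : ℕ → ℕ → Mz) :
    ∑ i ∈ range (n + 1), ∑ l ∈ range (i + 1), f i l
      = ∑ a ∈ range (n + 1), ∑ t ∈ range (n + 1 - a), f (a + t) a := by
  have h : ∀ i ∈ range (n + 1), ∑ l ∈ range (i + 1), f i l
      = ∑ l ∈ range (i + 1), f i (i - l) := fun i _ => refl_tri i (f i)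
  rw [Finset.sum_congr rfl h, tri1 n (fun i l => f i (i - l))]
  refine Finset.sum_congr rfl fun a ha => Finset.sum_congr rfl fun t ht => ?_
  simp only [Finset.mem_range] at ha ht
  congr 1
  omega

lemma shift_sum (j N : ℕ) (f : ℕ → Mz) (h1 : ∀ K, K < j → f K = 0)
    (h2 : ∀ K, N ≤ K → f K = 0) :
    ∑ l ∈ range N, f (j + l) = ∑ K ∈ range N, f K := by
  have e1 : ∑ l ∈ range N, f (j + l) = ∑ K ∈ Ico j (j + N), f K := by
    rw [Finset.sum_Ico_eq_sum_range]
    simp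
  have e2 : ∑ K ∈ Ico j (j + N), f K = ∑ K ∈ range (j + N), f K := by
    refine Finset.sum_subset ?_ ?_
    · intro x hx; simp only [Finset.mem_Ico] at hx; simp only [Finset.mem_range]; omega
    · intro x hx hx2
      simp only [Finset.mem_range] at hx
      simp only [Finset.mem_Ico, not_and, not_le] at hx2
      rcases lt_or_ge x j with h | h
      · exact h1 x h
      · exact h2 x (by omega)
  have e3 : ∑ K ∈ range N, f K = ∑ K ∈ range (j + N), f K := by
    refine Finset.sum_subset ?_ ?_
    · intro x hx; simp only [Finset.mem_range] at hx ⊢; omega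
    · intro x hx hx2
      simp only [Finset.mem_range, not_lt] at hx hx2
      exact h2 x hx2
  rw [e1, e2, e3]

end AuxTri

lemma resProd_coe (A B : Ser M) (i : ℕ) (x : ℤ) (w : M) :
    resProd A B (i : ℤ) x w = ∑ l ∈ range (i + 1),
      ((-1:ℤ)^l * (i.choose l : ℤ)) •
        (A ((i:ℤ) - l) (B (x + l) w) - (-1:ℤ)^i • B ((i:ℤ) + x - l) (A (l:ℤ) w)) := by
  rw [resProd]
  rw [finsum_eq_sum_of_support_subset _ (s := range (i+1)) ?_]
  · refine Finset.sum_congr rfl fun l hl => ?_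
    rw [ichoose_natCast, msign_natCast]
  · intro l hl
    simp only [Function.mem_support, ne_eq] at hl
    simp only [Finset.coe_range, Set.mem_Iio]
    by_contra h
    push_neg at h
    exact hl (by rw [ichoose_natCast_eq_zero (by omega)]; simp)

lemma resProd_zero (A B : Ser M) (hlA : IsLinSer (k := k) A) (hlB : IsLinSer (k := k) B)
    (m x : ℤ) : resProd A B m x (0 : M) = 0 := by
  rw [resProd]
  have h : ∀ l : ℕ, ((-1:ℤ)^l * ichoose m l) •
      (A (m - (l:ℤ)) (B (x + (l:ℤ)) (0:M)) - msign m • B (m + x - (l:ℤ)) (A (l:ℤ) (0:M))) = 0 := by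
    intro l
    rw [(hlB _).map_zero, (hlA _).map_zero, (hlA _).map_zero, (hlB _).map_zero]
    simp
  simp only [h, finsum_zero]

lemma neg_one_pow_mul_self (j : ℕ) : (-1:ℤ)^j * (-1:ℤ)^j = 1 := by
  rw [← pow_add]
  exact Even.neg_one_pow ⟨j, rfl⟩

lemma choose_prod (p α t : ℕ) (h : α + t ≤ p) :
    (p.choose (α + t) : ℤ) * ((α + t).choose t : ℤ)
      = (p.choose α : ℤ) * ((p - α).choose t : ℤ) := by
  have h1 : (α + t).choose t = (α + t).choose α := by
    have h := Nat.choose_symm (Nat.le_add_left t α)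
    rw [Nat.add_sub_cancel] at h
    exact h.symm
  have h2 := Nat.choose_mul (n := p) (k := α + t) (s := α) (Nat.le_add_right α t)
  rw [Nat.add_sub_cancel_left] at h2
  rw [h1]
  exact_mod_cast congrArg (Nat.cast (R := ℤ)) h2

lemma P1 (A B : Ser M) (p : ℕ) (q : ℤ) (j : ℕ) (w : M) :
    ∑ i ∈ range (p + 1),
        ((p.choose i : ℤ) * ((-1:ℤ)^j * ichoose ((p:ℤ) + q - i) j)) •
          resProd A B (i : ℤ) ((p:ℤ) + q - i - j) w
      = ∑ a ∈ range (p + 1),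
          ((-1:ℤ)^a * (p.choose a : ℤ) * msign ((j:ℤ) - a) * ich q ((j:ℤ) - a)) •
            (A ((p:ℤ) - a) (B (q - j + a) w) - B (q - j + a) (A ((p:ℤ) - a) w)) := by
  -- step 1 : expand and split
  have step1 : ∑ i ∈ range (p + 1),
        ((p.choose i : ℤ) * ((-1:ℤ)^j * ichoose ((p:ℤ) + q - i) j)) •
          resProd A B (i : ℤ) ((p:ℤ) + q - i - j) w
      = (∑ i ∈ range (p + 1), ∑ l ∈ range (i + 1),
          (((p.choose i : ℤ) * ((-1:ℤ)^j * ichoose ((p:ℤ) + q - i) j))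
            * ((-1:ℤ)^l * (i.choose l : ℤ))) • A ((i:ℤ) - l) (B ((p:ℤ) + q - i - j + l) w))
        - ∑ i ∈ range (p + 1), ∑ l ∈ range (i + 1),
          (((p.choose i : ℤ) * ((-1:ℤ)^j * ichoose ((p:ℤ) + q - i) j))
            * ((-1:ℤ)^l * (i.choose l : ℤ)) * (-1:ℤ)^i) •
              B ((i:ℤ) + ((p:ℤ) + q - i - j) - l) (A (l:ℤ) w) := by
    rw [← Finset.sum_sub_distrib]
    refine Finset.sum_congr rfl fun i hi => ?_
    rw [resProd_coe, Finset.smul_sum, ← Finset.sum_sub_distrib]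
    refine Finset.sum_congr rfl fun l hl => ?_
    have harg : (p:ℤ) + q - i - j + l = ((p:ℤ) + q - i - j) + l := by ring
    rw [harg]
    module
  rw [step1]
  -- step 2 : canonical middle form
  have stepA : ∑ i ∈ range (p + 1), ∑ l ∈ range (i + 1),
          (((p.choose i : ℤ) * ((-1:ℤ)^j * ichoose ((p:ℤ) + q - i) j))
            * ((-1:ℤ)^l * (i.choose l : ℤ))) • A ((i:ℤ) - l) (B ((p:ℤ) + q - i - j + l) w)
      = ∑ α ∈ range (p + 1),
          ((-1:ℤ)^j * (p.choose α : ℤ) * ich q ((j:ℤ) - ((p:ℤ) - α))) •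
            A (α:ℤ) (B ((p:ℤ) + q - j - α) w) := by
    rw [tri1 p (fun i l => (((p.choose i : ℤ) * ((-1:ℤ)^j * ichoose ((p:ℤ) + q - i) j))
            * ((-1:ℤ)^l * (i.choose l : ℤ))) • A ((i:ℤ) - l) (B ((p:ℤ) + q - i - j + l) w))]
    refine Finset.sum_congr rfl fun α hα => ?_
    simp only [Finset.mem_range] at hα
    have hαp : α ≤ p := by omega
    have hr : p + 1 - α = (p - α) + 1 := by omega
    have hv : ∀ t ∈ range ((p - α) + 1),
        (((p.choose (α + t) : ℤ) * ((-1:ℤ)^j * ichoose ((p:ℤ) + q - ((α + t : ℕ) : ℤ)) j))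
          * ((-1:ℤ)^t * ((α + t).choose t : ℤ))) •
            A ((↑(α + t):ℤ) - t) (B ((p:ℤ) + q - ((α + t : ℕ) : ℤ) - j + t) w)
        = (((-1:ℤ)^j * (p.choose α : ℤ))
            * ((-1:ℤ)^t * (((p - α)).choose t : ℤ) * ich (q + ((p - α : ℕ) : ℤ) - t) (j:ℤ))) •
            A (α:ℤ) (B ((p:ℤ) + q - j - α) w) := by
      intro t ht
      simp only [Finset.mem_range] at ht
      have e1 : (↑(α + t):ℤ) - t = (α:ℤ) := by push_cast; ring
      have e2 : (p:ℤ) + q - ((α + t : ℕ) : ℤ) - j + t = (p:ℤ) + q - j - α := by push_cast; ring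
      have e3 : ichoose ((p:ℤ) + q - ((α + t : ℕ) : ℤ)) j = ich (q + ((p - α : ℕ) : ℤ) - t) (j:ℤ) := by
        rw [ich_coe]
        congr 1
        push_cast [Nat.cast_sub hαp]
        ring
      have e4 := choose_prod p α t (by omega)
      rw [e1, e2, e3]
      congr 1
      calc (p.choose (α + t) : ℤ) * ((-1:ℤ)^j * ich (q + ((p - α : ℕ) : ℤ) - t) (j:ℤ))
            * ((-1:ℤ)^t * ((α + t).choose t : ℤ))
          = ((p.choose (α + t) : ℤ) * ((α + t).choose t : ℤ)) * ((-1:ℤ)^j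
              * ich (q + ((p - α : ℕ) : ℤ) - t) (j:ℤ)) * (-1:ℤ)^t := by ring
        _ = _ := by rw [e4]; ring
    rw [hr, Finset.sum_congr rfl hv, ← Finset.sum_smul]
    congr 1
    rw [← Finset.mul_sum]
    have hid := ID1 (p - α) q (j:ℤ)
    have : ∑ t ∈ range ((p - α) + 1),
        (-1:ℤ)^t * (((p - α)).choose t : ℤ) * ich (q + ((p - α : ℕ) : ℤ) - t) (j:ℤ)
        = ich q ((j:ℤ) - ((p:ℤ) - α)) := by
      rw [hid]
      congr 1
      push_cast [Nat.cast_sub hαp]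
      ring
    rw [this]
  have stepB : ∑ i ∈ range (p + 1), ∑ l ∈ range (i + 1),
          (((p.choose i : ℤ) * ((-1:ℤ)^j * ichoose ((p:ℤ) + q - i) j))
            * ((-1:ℤ)^l * (i.choose l : ℤ)) * (-1:ℤ)^i) •
              B ((i:ℤ) + ((p:ℤ) + q - i - j) - l) (A (l:ℤ) w)
      = ∑ α ∈ range (p + 1),
          ((-1:ℤ)^j * (p.choose α : ℤ) * ich q ((j:ℤ) - ((p:ℤ) - α))) •
            B ((p:ℤ) + q - j - α) (A (α:ℤ) w) := by
    rw [tri2 p (fun i l => (((p.choose i : ℤ) * ((-1:ℤ)^j * ichoose ((p:ℤ) + q - i) j))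
            * ((-1:ℤ)^l * (i.choose l : ℤ)) * (-1:ℤ)^i) •
              B ((i:ℤ) + ((p:ℤ) + q - i - j) - l) (A (l:ℤ) w))]
    refine Finset.sum_congr rfl fun α hα => ?_
    simp only [Finset.mem_range] at hα
    have hαp : α ≤ p := by omega
    have hr : p + 1 - α = (p - α) + 1 := by omega
    have hv : ∀ t ∈ range ((p - α) + 1),
        (((p.choose (α + t) : ℤ) * ((-1:ℤ)^j * ichoose ((p:ℤ) + q - ((α + t : ℕ) : ℤ)) j))
          * ((-1:ℤ)^α * ((α + t).choose α : ℤ)) * (-1:ℤ)^(α + t)) •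
            B ((↑(α + t):ℤ) + ((p:ℤ) + q - ((α + t : ℕ) : ℤ) - j) - α) (A (α:ℤ) w)
        = (((-1:ℤ)^j * (p.choose α : ℤ))
            * ((-1:ℤ)^t * (((p - α)).choose t : ℤ) * ich (q + ((p - α : ℕ) : ℤ) - t) (j:ℤ))) •
            B ((p:ℤ) + q - j - α) (A (α:ℤ) w) := by
      intro t ht
      simp only [Finset.mem_range] at ht
      have e2 : (↑(α + t):ℤ) + ((p:ℤ) + q - ((α + t : ℕ) : ℤ) - j) - α = (p:ℤ) + q - j - α := by
        push_cast; ring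
      have e3 : ichoose ((p:ℤ) + q - ((α + t : ℕ) : ℤ)) j = ich (q + ((p - α : ℕ) : ℤ) - t) (j:ℤ) := by
        rw [ich_coe]
        congr 1
        push_cast [Nat.cast_sub hαp]
        ring
      have h1 : (α + t).choose α = (α + t).choose t := by
        have h := Nat.choose_symm (Nat.le_add_left t α)
        rw [Nat.add_sub_cancel] at h
        exact h
      have e4 := choose_prod p α t (by omega)
      rw [e2, e3, h1]
      congr 1
      have e5 : (-1:ℤ)^α * (-1:ℤ)^(α+t) = (-1:ℤ)^t := by
        rw [pow_add]
        calc (-1:ℤ)^α * ((-1:ℤ)^α * (-1:ℤ)^t) = ((-1:ℤ)^α * (-1:ℤ)^α) * (-1:ℤ)^t := by ring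
          _ = (-1:ℤ)^t := by rw [neg_one_pow_mul_self]; ring
      calc (p.choose (α + t) : ℤ) * ((-1:ℤ)^j * ich (q + ((p - α : ℕ) : ℤ) - t) (j:ℤ))
            * ((-1:ℤ)^α * ((α + t).choose t : ℤ)) * (-1:ℤ)^(α + t)
          = ((p.choose (α + t) : ℤ) * ((α + t).choose t : ℤ))
              * ((-1:ℤ)^j * ich (q + ((p - α : ℕ) : ℤ) - t) (j:ℤ))
              * ((-1:ℤ)^α * (-1:ℤ)^(α + t)) := by ring
        _ = _ := by rw [e4, e5]; ring
    rw [hr, Finset.sum_congr rfl hv, ← Finset.sum_smul]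
    congr 1
    rw [← Finset.mul_sum]
    have hid := ID1 (p - α) q (j:ℤ)
    have : ∑ t ∈ range ((p - α) + 1),
        (-1:ℤ)^t * (((p - α)).choose t : ℤ) * ich (q + ((p - α : ℕ) : ℤ) - t) (j:ℤ)
        = ich q ((j:ℤ) - ((p:ℤ) - α)) := by
      rw [hid]
      congr 1
      push_cast [Nat.cast_sub hαp]
      ring
    rw [this]
  rw [stepA, stepB]
  -- step 3 : identify with the RHS (reflected)
  rw [← Finset.sum_sub_distrib]
  rw [refl_tri p (fun a => ((-1:ℤ)^a * (p.choose a : ℤ) * msign ((j:ℤ) - a) * ich q ((j:ℤ) - a)) •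
            (A ((p:ℤ) - a) (B (q - j + a) w) - B (q - j + a) (A ((p:ℤ) - a) w)))]
  refine Finset.sum_congr rfl fun α hα => ?_
  simp only [Finset.mem_range] at hα
  have hαp : α ≤ p := by omega
  have e1 : (p:ℤ) - ((p - α : ℕ) : ℤ) = (α:ℤ) := by push_cast [Nat.cast_sub hαp]; ring
  have e2 : q - j + ((p - α : ℕ) : ℤ) = (p:ℤ) + q - j - α := by push_cast [Nat.cast_sub hαp]; ring
  have e3 : msign ((j:ℤ) - ((p - α : ℕ) : ℤ)) = (-1:ℤ)^j * (-1:ℤ)^(p - α) := by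
    rw [msign_sub_natCast, msign_natCast]
  have e4 : ((j:ℤ) - ((p - α : ℕ) : ℤ)) = (j:ℤ) - ((p:ℤ) - α) := by
    push_cast [Nat.cast_sub hαp]; ring
  rw [e1, e2, e3, e4, smul_sub]
  have e5 : (-1:ℤ)^(p - α) * (p.choose (p - α) : ℤ) * ((-1:ℤ)^j * (-1:ℤ)^(p - α))
        * ich q ((j:ℤ) - ((p:ℤ) - α))
      = (-1:ℤ)^j * (p.choose α : ℤ) * ich q ((j:ℤ) - ((p:ℤ) - α)) := by
    rw [Nat.choose_symm hαp]
    calc (-1:ℤ)^(p - α) * (p.choose α : ℤ) * ((-1:ℤ)^j * (-1:ℤ)^(p - α))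
          * ich q ((j:ℤ) - ((p:ℤ) - α))
        = ((-1:ℤ)^(p-α) * (-1:ℤ)^(p-α)) * ((-1:ℤ)^j * (p.choose α : ℤ)
            * ich q ((j:ℤ) - ((p:ℤ) - α))) := by ring
      _ = _ := by rw [neg_one_pow_mul_self]; ring
  rw [e5]

lemma P2 (A B : Ser M) (p : ℕ) (q : ℤ) (kk : ℕ) (v : M) :
    ∑ i ∈ range (p + 1),
        ((-1:ℤ)^i * (p.choose i : ℤ) * msign ((kk:ℤ) - i) * ich ((p:ℤ) + q - i) ((kk:ℤ) - i)) •
          resProd A B (i : ℤ) ((kk:ℤ) - i) v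
      = ∑ a ∈ range (p + 1),
          ((-1:ℤ)^a * (p.choose a : ℤ) * msign ((kk:ℤ) - a) * ich q ((kk:ℤ) - a)) •
            (A (a:ℤ) (B ((kk:ℤ) - a) v) - B ((kk:ℤ) - a) (A (a:ℤ) v)) := by
  have step1 : ∑ i ∈ range (p + 1),
        ((-1:ℤ)^i * (p.choose i : ℤ) * msign ((kk:ℤ) - i) * ich ((p:ℤ) + q - i) ((kk:ℤ) - i)) •
          resProd A B (i : ℤ) ((kk:ℤ) - i) v
      = (∑ i ∈ range (p + 1), ∑ l ∈ range (i + 1),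
          (((-1:ℤ)^i * (p.choose i : ℤ) * msign ((kk:ℤ) - i) * ich ((p:ℤ) + q - i) ((kk:ℤ) - i))
            * ((-1:ℤ)^l * (i.choose l : ℤ))) • A ((i:ℤ) - l) (B ((kk:ℤ) - i + l) v))
        - ∑ i ∈ range (p + 1), ∑ l ∈ range (i + 1),
          (((-1:ℤ)^i * (p.choose i : ℤ) * msign ((kk:ℤ) - i) * ich ((p:ℤ) + q - i) ((kk:ℤ) - i))
            * ((-1:ℤ)^l * (i.choose l : ℤ)) * (-1:ℤ)^i) •
              B ((i:ℤ) + ((kk:ℤ) - i) - l) (A (l:ℤ) v) := by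
    rw [← Finset.sum_sub_distrib]
    refine Finset.sum_congr rfl fun i hi => ?_
    rw [resProd_coe, Finset.smul_sum, ← Finset.sum_sub_distrib]
    refine Finset.sum_congr rfl fun l hl => ?_
    have harg : (kk:ℤ) - i + l = ((kk:ℤ) - i) + l := by ring
    rw [harg]
    module
  rw [step1]
  have stepA : ∑ i ∈ range (p + 1), ∑ l ∈ range (i + 1),
          (((-1:ℤ)^i * (p.choose i : ℤ) * msign ((kk:ℤ) - i) * ich ((p:ℤ) + q - i) ((kk:ℤ) - i))
            * ((-1:ℤ)^l * (i.choose l : ℤ))) • A ((i:ℤ) - l) (B ((kk:ℤ) - i + l) v)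
      = ∑ α ∈ range (p + 1),
          ((-1:ℤ)^α * (p.choose α : ℤ) * msign ((kk:ℤ) - α) * ich q ((kk:ℤ) - α)) •
            A (α:ℤ) (B ((kk:ℤ) - α) v) := by
    rw [tri1 p (fun i l => (((-1:ℤ)^i * (p.choose i : ℤ) * msign ((kk:ℤ) - i)
            * ich ((p:ℤ) + q - i) ((kk:ℤ) - i))
            * ((-1:ℤ)^l * (i.choose l : ℤ))) • A ((i:ℤ) - l) (B ((kk:ℤ) - i + l) v))]
    refine Finset.sum_congr rfl fun α hα => ?_
    simp only [Finset.mem_range] at hα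
    have hαp : α ≤ p := by omega
    have hr : p + 1 - α = (p - α) + 1 := by omega
    have hv : ∀ t ∈ range ((p - α) + 1),
        (((-1:ℤ)^(α+t) * (p.choose (α+t) : ℤ) * msign ((kk:ℤ) - ((α + t : ℕ) : ℤ))
            * ich ((p:ℤ) + q - ((α + t : ℕ) : ℤ)) ((kk:ℤ) - ((α + t : ℕ) : ℤ)))
          * ((-1:ℤ)^t * ((α + t).choose t : ℤ))) •
            A ((↑(α + t):ℤ) - t) (B ((kk:ℤ) - ((α + t : ℕ) : ℤ) + t) v)
        = (((-1:ℤ)^α * (p.choose α : ℤ) * msign ((kk:ℤ) - α))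
            * ((-1:ℤ)^t * (((p - α)).choose t : ℤ)
               * ich (q + ((p - α : ℕ) : ℤ) - t) (((kk:ℤ) - α) - t))) •
            A (α:ℤ) (B ((kk:ℤ) - α) v) := by
      intro t ht
      simp only [Finset.mem_range] at ht
      have e1 : (↑(α + t):ℤ) - t = (α:ℤ) := by push_cast; ring
      have e2 : (kk:ℤ) - ((α + t : ℕ) : ℤ) + t = (kk:ℤ) - α := by push_cast; ring
      have e3 : ich ((p:ℤ) + q - ((α + t : ℕ) : ℤ)) ((kk:ℤ) - ((α + t : ℕ) : ℤ))
          = ich (q + ((p - α : ℕ) : ℤ) - t) (((kk:ℤ) - α) - t) := by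
        congr 1
        · push_cast [Nat.cast_sub hαp]; ring
        · push_cast; ring
      have e6 : msign ((kk:ℤ) - ((α + t : ℕ) : ℤ)) = msign ((kk:ℤ) - α) * (-1:ℤ)^t := by
        have : (kk:ℤ) - ((α + t : ℕ) : ℤ) = ((kk:ℤ) - α) - (t:ℕ) := by push_cast; ring
        rw [this, msign_sub_natCast]
      have e4 := choose_prod p α t (by omega)
      rw [e1, e2, e3, e6]
      congr 1
      have e5 : (-1:ℤ)^(α+t) * (-1:ℤ)^t = (-1:ℤ)^α := by
        rw [pow_add]
        calc (-1:ℤ)^α * (-1:ℤ)^t * (-1:ℤ)^t = (-1:ℤ)^α * ((-1:ℤ)^t * (-1:ℤ)^t) := by ring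
          _ = (-1:ℤ)^α := by rw [neg_one_pow_mul_self]; ring
      calc (-1:ℤ)^(α+t) * (p.choose (α+t) : ℤ) * (msign ((kk:ℤ) - α) * (-1:ℤ)^t)
            * ich (q + ((p - α : ℕ) : ℤ) - t) (((kk:ℤ) - α) - t)
            * ((-1:ℤ)^t * ((α + t).choose t : ℤ))
          = ((p.choose (α+t) : ℤ) * ((α + t).choose t : ℤ))
              * ((-1:ℤ)^(α+t) * (-1:ℤ)^t) * msign ((kk:ℤ) - α) * (-1:ℤ)^t
              * ich (q + ((p - α : ℕ) : ℤ) - t) (((kk:ℤ) - α) - t) := by ring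
        _ = _ := by rw [e4, e5]; ring
    rw [hr, Finset.sum_congr rfl hv, ← Finset.sum_smul]
    congr 1
    rw [← Finset.mul_sum]
    have hid := ID2 (p - α) q ((kk:ℤ) - α)
    rw [hid]
  have stepB : ∑ i ∈ range (p + 1), ∑ l ∈ range (i + 1),
          (((-1:ℤ)^i * (p.choose i : ℤ) * msign ((kk:ℤ) - i) * ich ((p:ℤ) + q - i) ((kk:ℤ) - i))
            * ((-1:ℤ)^l * (i.choose l : ℤ)) * (-1:ℤ)^i) •
              B ((i:ℤ) + ((kk:ℤ) - i) - l) (A (l:ℤ) v)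
      = ∑ α ∈ range (p + 1),
          ((-1:ℤ)^α * (p.choose α : ℤ) * msign ((kk:ℤ) - α) * ich q ((kk:ℤ) - α)) •
            B ((kk:ℤ) - α) (A (α:ℤ) v) := by
    rw [tri2 p (fun i l => (((-1:ℤ)^i * (p.choose i : ℤ) * msign ((kk:ℤ) - i)
            * ich ((p:ℤ) + q - i) ((kk:ℤ) - i))
            * ((-1:ℤ)^l * (i.choose l : ℤ)) * (-1:ℤ)^i) •
              B ((i:ℤ) + ((kk:ℤ) - i) - l) (A (l:ℤ) v))]
    refine Finset.sum_congr rfl fun α hα => ?_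
    simp only [Finset.mem_range] at hα
    have hαp : α ≤ p := by omega
    have hr : p + 1 - α = (p - α) + 1 := by omega
    have hv : ∀ t ∈ range ((p - α) + 1),
        (((-1:ℤ)^(α+t) * (p.choose (α+t) : ℤ) * msign ((kk:ℤ) - ((α + t : ℕ) : ℤ))
            * ich ((p:ℤ) + q - ((α + t : ℕ) : ℤ)) ((kk:ℤ) - ((α + t : ℕ) : ℤ)))
          * ((-1:ℤ)^α * ((α + t).choose α : ℤ)) * (-1:ℤ)^(α+t)) •
            B ((↑(α + t):ℤ) + ((kk:ℤ) - ((α + t : ℕ) : ℤ)) - α) (A (α:ℤ) v)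
        = (((-1:ℤ)^α * (p.choose α : ℤ) * msign ((kk:ℤ) - α))
            * ((-1:ℤ)^t * (((p - α)).choose t : ℤ)
               * ich (q + ((p - α : ℕ) : ℤ) - t) (((kk:ℤ) - α) - t))) •
            B ((kk:ℤ) - α) (A (α:ℤ) v) := by
      intro t ht
      simp only [Finset.mem_range] at ht
      have e2 : (↑(α + t):ℤ) + ((kk:ℤ) - ((α + t : ℕ) : ℤ)) - α = (kk:ℤ) - α := by
        push_cast; ring
      have e3 : ich ((p:ℤ) + q - ((α + t : ℕ) : ℤ)) ((kk:ℤ) - ((α + t : ℕ) : ℤ))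
          = ich (q + ((p - α : ℕ) : ℤ) - t) (((kk:ℤ) - α) - t) := by
        congr 1
        · push_cast [Nat.cast_sub hαp]; ring
        · push_cast; ring
      have e6 : msign ((kk:ℤ) - ((α + t : ℕ) : ℤ)) = msign ((kk:ℤ) - α) * (-1:ℤ)^t := by
        have : (kk:ℤ) - ((α + t : ℕ) : ℤ) = ((kk:ℤ) - α) - (t:ℕ) := by push_cast; ring
        rw [this, msign_sub_natCast]
      have h1 : (α + t).choose α = (α + t).choose t := by
        have h := Nat.choose_symm (Nat.le_add_left t α)
        rw [Nat.add_sub_cancel] at h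
        exact h
      have e4 := choose_prod p α t (by omega)
      rw [e2, e3, e6, h1]
      congr 1
      have e5 : (-1:ℤ)^(α+t) * (-1:ℤ)^(α+t) = 1 := neg_one_pow_mul_self (α+t)
      calc (-1:ℤ)^(α+t) * (p.choose (α+t) : ℤ) * (msign ((kk:ℤ) - α) * (-1:ℤ)^t)
            * ich (q + ((p - α : ℕ) : ℤ) - t) (((kk:ℤ) - α) - t)
            * ((-1:ℤ)^α * ((α + t).choose t : ℤ)) * (-1:ℤ)^(α+t)
          = ((p.choose (α+t) : ℤ) * ((α + t).choose t : ℤ))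
              * ((-1:ℤ)^(α+t) * (-1:ℤ)^(α+t)) * msign ((kk:ℤ) - α) * ((-1:ℤ)^t * (-1:ℤ)^α)
              * ich (q + ((p - α : ℕ) : ℤ) - t) (((kk:ℤ) - α) - t) := by ring
        _ = _ := by rw [e4, e5]; ring
    rw [hr, Finset.sum_congr rfl hv, ← Finset.sum_smul]
    congr 1
    rw [← Finset.mul_sum]
    have hid := ID2 (p - α) q ((kk:ℤ) - α)
    rw [hid]
  rw [stepA, stepB]
  rw [← Finset.sum_sub_distrib]
  refine Finset.sum_congr rfl fun α hα => ?_
  rw [smul_sub]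

lemma resProd_apply (A B : Ser M) (m x : ℤ) (w : M) :
    resProd A B m x w = ∑ᶠ i : ℕ, ((-1:ℤ)^i * ichoose m i) •
      (A (m - (i:ℤ)) (B (x + (i:ℤ)) w) - msign m • B (m + x - (i:ℤ)) (A (i:ℤ) w)) := rfl

lemma CF (A B C : Ser M) (hB : IsFieldSer B) (hC : IsFieldSer C)
    (hlA : IsLinSer (k := k) A) (hlB : IsLinSer (k := k) B) (hlC : IsLinSer (k := k) C)
    (p : ℕ) (q n : ℤ) (v : M) :
    ∑ i ∈ range (p + 1), (p.choose i : ℤ) • resProd (resProd A B (i:ℤ)) C ((p:ℤ) + q - i) n v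
      = resProd A (resProd B C q) (p:ℤ) n v - resProd B (resProd A C (p:ℤ)) q n v := by
  -- linearity helpers
  have hAzero : ∀ m : ℤ, A m (0:M) = 0 := fun m => (hlA m).map_zero
  have hBzero : ∀ m : ℤ, B m (0:M) = 0 := fun m => (hlB m).map_zero
  have hCzero : ∀ m : ℤ, C m (0:M) = 0 := fun m => (hlC m).map_zero
  have hAsum : ∀ (m:ℤ) (s : Finset ℕ) (f : ℕ → M),
      A m (∑ x ∈ s, f x) = ∑ x ∈ s, A m (f x) :=
    fun m s f => map_sum (AddMonoidHom.mk' (A m) ((hlA m).map_add)) f s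
  have hBsum : ∀ (m:ℤ) (s : Finset ℕ) (f : ℕ → M),
      B m (∑ x ∈ s, f x) = ∑ x ∈ s, B m (f x) :=
    fun m s f => map_sum (AddMonoidHom.mk' (B m) ((hlB m).map_add)) f s
  have hCsum : ∀ (m:ℤ) (s : Finset ℕ) (f : ℕ → M),
      C m (∑ x ∈ s, f x) = ∑ x ∈ s, C m (f x) :=
    fun m s f => map_sum (AddMonoidHom.mk' (C m) ((hlC m).map_add)) f s
  have hAsmul : ∀ (m:ℤ) (c : ℤ) (x : M), A m (c • x) = c • A m x :=
    fun m c x => map_zsmul (AddMonoidHom.mk' (A m) ((hlA m).map_add)) c x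
  have hBsmul : ∀ (m:ℤ) (c : ℤ) (x : M), B m (c • x) = c • B m x :=
    fun m c x => map_zsmul (AddMonoidHom.mk' (B m) ((hlB m).map_add)) c x
  have hCsmul : ∀ (m:ℤ) (c : ℤ) (x : M), C m (c • x) = c • C m x :=
    fun m c x => map_zsmul (AddMonoidHom.mk' (C m) ((hlC m).map_add)) c x
  have hAsub : ∀ (m:ℤ) (x y : M), A m (x - y) = A m x - A m y :=
    fun m x y => map_sub (AddMonoidHom.mk' (A m) ((hlA m).map_add)) x y
  have hBsub : ∀ (m:ℤ) (x y : M), B m (x - y) = B m x - B m y :=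
    fun m x y => map_sub (AddMonoidHom.mk' (B m) ((hlB m).map_add)) x y
  have hCsub : ∀ (m:ℤ) (x y : M), C m (x - y) = C m x - C m y :=
    fun m x y => map_sub (AddMonoidHom.mk' (C m) ((hlC m).map_add)) x y
  -- bounds
  obtain ⟨nB, hnB⟩ := hB v
  obtain ⟨nC, hnC⟩ := hC v
  have hBA := fun a : ℕ => hB (A (a:ℤ) v)
  have hCA := fun a : ℕ => hC (A (a:ℤ) v)
  choose gB hgB using hBA
  choose gC hgC using hCA
  set NN : ℕ := p + 1 + nB.toNat + (nC - n).toNat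
      + ((range (p+1)).sup fun a : ℕ => (gB a + p).toNat)
      + ((range (p+1)).sup fun a : ℕ => (gC a - n + p).toNat) with hNNdef
  have hN2 : ∀ m : ℤ, (NN:ℤ) ≤ m → B m v = 0 := by
    intro m hm
    apply hnB
    have := Int.self_le_toNat nB
    omega
  have hN1 : ∀ m : ℤ, (NN:ℤ) + n ≤ m → C m v = 0 := by
    intro m hm
    apply hnC
    have := Int.self_le_toNat (nC - n)
    omega
  have hN3 : ∀ a : ℕ, a ≤ p → ∀ m : ℤ, (NN:ℤ) - p ≤ m → B m (A (a:ℤ) v) = 0 := by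
    intro a ha m hm
    apply hgB
    have h1 : (gB a + p).toNat ≤ (range (p+1)).sup (fun a : ℕ => (gB a + p).toNat) :=
      Finset.le_sup (f := fun a : ℕ => (gB a + (p:ℤ)).toNat) (Finset.mem_range.2 (by omega : a < p + 1))
    have h2 := Int.self_le_toNat (gB a + p)
    omega
  have hN4 : ∀ a : ℕ, a ≤ p → ∀ m : ℤ, (NN:ℤ) + n - p ≤ m → C m (A (a:ℤ) v) = 0 := by
    intro a ha m hm
    apply hgC
    have h1 : (gC a - n + p).toNat ≤ (range (p+1)).sup (fun a : ℕ => (gC a - n + p).toNat) :=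
      Finset.le_sup (f := fun a : ℕ => (gC a - n + (p:ℤ)).toNat) (Finset.mem_range.2 (by omega : a < p + 1))
    have h2 := Int.self_le_toNat (gC a - n + p)
    omega
  clear hnB hnC hgB hgC
  -- vanishing of the modes of (A B) on v
  have hDv : ∀ i : ℕ, i ≤ p → ∀ x : ℤ, (NN:ℤ) ≤ x → resProd A B (i:ℤ) x v = 0 := by
    intro i hi x hx
    rw [resProd_coe]
    apply Finset.sum_eq_zero
    intro l hl
    simp only [Finset.mem_range] at hl
    rw [hN2 (x + l) (by omega), hAzero, hN3 l (by omega) ((i:ℤ) + x - l) (by omega)]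
    simp
  -- vanishing of the modes of (A C) on v
  have hACv : ∀ x : ℤ, (NN:ℤ) + n ≤ x → resProd A C (p:ℤ) x v = 0 := by
    intro x hx
    rw [resProd_coe]
    apply Finset.sum_eq_zero
    intro l hl
    simp only [Finset.mem_range] at hl
    rw [hN1 (x + l) (by omega), hAzero, hN4 l (by omega) ((p:ℤ) + x - l) (by omega)]
    simp
  -- truncate LHS inner finsums
  have hL : ∀ i ∈ range (p + 1),
      resProd (resProd A B (i:ℤ)) C ((p:ℤ) + q - i) n v
        = ∑ j ∈ range NN, ((-1:ℤ)^j * ichoose ((p:ℤ) + q - i) j) •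
            (resProd A B (i:ℤ) ((p:ℤ) + q - i - j) (C (n + j) v)
              - msign ((p:ℤ) + q - i) • C ((p:ℤ) + q - i + n - j) (resProd A B (i:ℤ) (j:ℤ) v)) := by
    intro i hi
    simp only [Finset.mem_range] at hi
    rw [resProd_apply]
    apply finsum_eq_sum_of_support_subset
    intro j hj
    simp only [Function.mem_support, ne_eq] at hj
    simp only [Finset.coe_range, Set.mem_Iio]
    by_contra hcon
    push_neg at hcon
    apply hj
    rw [hN1 (n + j) (by omega), resProd_zero A B hlA hlB,
        hDv i (by omega) (j:ℤ) (by exact_mod_cast Nat.cast_le.2 hcon), hCzero]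
    simp
  have hL2 : ∑ i ∈ range (p + 1), (p.choose i : ℤ) • resProd (resProd A B (i:ℤ)) C ((p:ℤ) + q - i) n v
      = ∑ i ∈ range (p + 1), (p.choose i : ℤ) •
          ∑ j ∈ range NN, ((-1:ℤ)^j * ichoose ((p:ℤ) + q - i) j) •
            (resProd A B (i:ℤ) ((p:ℤ) + q - i - j) (C (n + j) v)
              - msign ((p:ℤ) + q - i) • C ((p:ℤ) + q - i + n - j) (resProd A B (i:ℤ) (j:ℤ) v)) :=
    Finset.sum_congr rfl (fun i hi => by rw [hL i hi])
  rw [hL2]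
  have hsplit : ∑ i ∈ range (p + 1), (p.choose i : ℤ) •
        ∑ j ∈ range NN, ((-1:ℤ)^j * ichoose ((p:ℤ) + q - i) j) •
            (resProd A B (i:ℤ) ((p:ℤ) + q - i - j) (C (n + j) v)
              - msign ((p:ℤ) + q - i) • C ((p:ℤ) + q - i + n - j) (resProd A B (i:ℤ) (j:ℤ) v))
      = (∑ i ∈ range (p + 1), ∑ j ∈ range NN,
          ((p.choose i : ℤ) * ((-1:ℤ)^j * ichoose ((p:ℤ) + q - i) j)) •
            resProd A B (i:ℤ) ((p:ℤ) + q - i - j) (C (n + j) v))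
        - ∑ i ∈ range (p + 1), ∑ j ∈ range NN,
          ((p.choose i : ℤ) * ((-1:ℤ)^j * ichoose ((p:ℤ) + q - i) j) * msign ((p:ℤ) + q - i)) •
            C ((p:ℤ) + q - i + n - j) (resProd A B (i:ℤ) (j:ℤ) v) := by
    rw [← Finset.sum_sub_distrib]
    refine Finset.sum_congr rfl fun i hi => ?_
    rw [Finset.smul_sum, ← Finset.sum_sub_distrib]
    refine Finset.sum_congr rfl fun j hj => ?_
    module
  rw [hsplit]
  have hPart1 : ∑ i ∈ range (p + 1), ∑ j ∈ range NN,
          ((p.choose i : ℤ) * ((-1:ℤ)^j * ichoose ((p:ℤ) + q - i) j)) •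
            resProd A B (i:ℤ) ((p:ℤ) + q - i - j) (C (n + j) v)
      = (∑ j ∈ range NN, ∑ a ∈ range (p + 1),
           ((-1:ℤ)^a * (p.choose a : ℤ) * msign ((j:ℤ) - a) * ich q ((j:ℤ) - a)) •
             A ((p:ℤ) - a) (B (q - j + a) (C (n + j) v)))
        - ∑ j ∈ range NN, ∑ a ∈ range (p + 1),
           ((-1:ℤ)^a * (p.choose a : ℤ) * msign ((j:ℤ) - a) * ich q ((j:ℤ) - a)) •
             B (q - j + a) (A ((p:ℤ) - a) (C (n + j) v)) := by
    rw [Finset.sum_comm, ← Finset.sum_sub_distrib]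
    refine Finset.sum_congr rfl fun j hj => ?_
    rw [P1 A B p q j (C (n + j) v), ← Finset.sum_sub_distrib]
    refine Finset.sum_congr rfl fun a ha => ?_
    rw [smul_sub]
  have hPart2 : ∑ i ∈ range (p + 1), ∑ j ∈ range NN,
          ((p.choose i : ℤ) * ((-1:ℤ)^j * ichoose ((p:ℤ) + q - i) j) * msign ((p:ℤ) + q - i)) •
            C ((p:ℤ) + q - i + n - j) (resProd A B (i:ℤ) (j:ℤ) v)
      = (∑ kk ∈ range (NN + p + 1), ∑ a ∈ range (p + 1),
           (msign ((p:ℤ) + q) * ((-1:ℤ)^a * (p.choose a : ℤ) * msign ((kk:ℤ) - a) * ich q ((kk:ℤ) - a))) •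
             C ((p:ℤ) + q + n - kk) (A (a:ℤ) (B ((kk:ℤ) - a) v)))
        - ∑ kk ∈ range (NN + p + 1), ∑ a ∈ range (p + 1),
           (msign ((p:ℤ) + q) * ((-1:ℤ)^a * (p.choose a : ℤ) * msign ((kk:ℤ) - a) * ich q ((kk:ℤ) - a))) •
             C ((p:ℤ) + q + n - kk) (B ((kk:ℤ) - a) (A (a:ℤ) v)) := by
    have hstep : ∀ i ∈ range (p + 1),
        ∑ j ∈ range NN, ((p.choose i : ℤ) * ((-1:ℤ)^j * ichoose ((p:ℤ) + q - i) j) * msign ((p:ℤ) + q - i)) •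
            C ((p:ℤ) + q - i + n - j) (resProd A B (i:ℤ) (j:ℤ) v)
        = ∑ kk ∈ range (NN + p + 1),
            (msign ((p:ℤ) + q) * ((-1:ℤ)^i * (p.choose i : ℤ) * msign ((kk:ℤ) - i) * ich ((p:ℤ) + q - i) ((kk:ℤ) - i))) •
              C ((p:ℤ) + q + n - kk) (resProd A B (i:ℤ) ((kk:ℤ) - i) v) := by
      intro i hi
      simp only [Finset.mem_range] at hi
      set f : ℕ → M := fun K =>
        (msign ((p:ℤ) + q) * ((-1:ℤ)^i * (p.choose i : ℤ) * msign ((K:ℤ) - i) * ich ((p:ℤ) + q - i) ((K:ℤ) - i))) •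
          C ((p:ℤ) + q + n - K) (resProd A B (i:ℤ) ((K:ℤ) - i) v) with hf
      have hshape : ∀ j ∈ range NN,
          ((p.choose i : ℤ) * ((-1:ℤ)^j * ichoose ((p:ℤ) + q - i) j) * msign ((p:ℤ) + q - i)) •
            C ((p:ℤ) + q - i + n - j) (resProd A B (i:ℤ) (j:ℤ) v) = f (i + j) := by
        intro j hj
        simp only [hf]
        have e1 : ((i + j : ℕ) : ℤ) - i = (j:ℤ) := by push_cast; ring
        have e2 : (p:ℤ) + q + n - ((i + j : ℕ) : ℤ) = (p:ℤ) + q - i + n - j := by push_cast; ring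
        rw [e1, e2]
        congr 1
        rw [ich_coe, msign_sub_natCast ((p:ℤ) + q) i, msign_natCast j]
        ring
      rw [Finset.sum_congr rfl hshape]
      have hext : ∑ j ∈ range NN, f (i + j) = ∑ j ∈ range (NN + p + 1), f (i + j) := by
        apply Finset.sum_subset
        · intro x hx; simp only [Finset.mem_range] at *; omega
        · intro x hx hx2
          simp only [Finset.mem_range, not_lt] at hx hx2
          simp only [hf]
          rw [hDv i (by omega) (((i + x : ℕ):ℤ) - i) (by push_cast; omega), hCzero]
          simp
      rw [hext, shift_sum i (NN + p + 1) f ?_ ?_]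
      · intro K hK
        simp only [hf]
        rw [ich_neg (by omega : (K:ℤ) - i < 0)]
        simp
      · intro K hK
        simp only [hf]
        rw [hDv i (by omega) ((K:ℤ) - i) (by omega), hCzero]
        simp
    rw [Finset.sum_congr rfl hstep, Finset.sum_comm, ← Finset.sum_sub_distrib]
    refine Finset.sum_congr rfl fun kk hkk => ?_
    have hpull : ∑ i ∈ range (p + 1),
        (msign ((p:ℤ) + q) * ((-1:ℤ)^i * (p.choose i : ℤ) * msign ((kk:ℤ) - i) * ich ((p:ℤ) + q - i) ((kk:ℤ) - i))) •
          C ((p:ℤ) + q + n - kk) (resProd A B (i:ℤ) ((kk:ℤ) - i) v)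
        = msign ((p:ℤ) + q) • C ((p:ℤ) + q + n - kk)
            (∑ i ∈ range (p + 1), ((-1:ℤ)^i * (p.choose i : ℤ) * msign ((kk:ℤ) - i) * ich ((p:ℤ) + q - i) ((kk:ℤ) - i)) •
              resProd A B (i : ℤ) ((kk:ℤ) - i) v) := by
      rw [hCsum, Finset.smul_sum]
      refine Finset.sum_congr rfl fun i hi => ?_
      rw [hCsmul]
      module
    rw [hpull, P2 A B p q kk v, hCsum, Finset.smul_sum, ← Finset.sum_sub_distrib]
    refine Finset.sum_congr rfl fun a ha => ?_
    rw [hCsmul, hCsub]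
    module
  rw [hPart1, hPart2]
  -- truncation of BC-products
  have hBC1 : ∀ j ∈ range (p+1), resProd B C q (n + (j:ℤ)) v
      = ∑ l ∈ range NN, ((-1:ℤ)^l * ichoose q l) •
          (B (q - l) (C (n + (j:ℤ) + l) v) - msign q • C (q + (n + (j:ℤ)) - l) (B (l:ℤ) v)) := by
    intro j hj
    simp only [Finset.mem_range] at hj
    rw [resProd_apply]
    apply finsum_eq_sum_of_support_subset
    intro l hl
    simp only [Function.mem_support, ne_eq] at hl
    simp only [Finset.coe_range, Set.mem_Iio]
    by_contra hcon
    push_neg at hcon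
    apply hl
    rw [hN1 (n + (j:ℤ) + l) (by omega), hBzero,
        hN2 (l:ℤ) (by exact_mod_cast Nat.cast_le.2 hcon), hCzero]
    simp
  have hBC2 : ∀ j ∈ range (p+1), resProd B C q ((p:ℤ) + n - j) (A (j:ℤ) v)
      = ∑ l ∈ range NN, ((-1:ℤ)^l * ichoose q l) •
          (B (q - l) (C ((p:ℤ) + n - j + l) (A (j:ℤ) v))
            - msign q • C (q + ((p:ℤ) + n - j) - l) (B (l:ℤ) (A (j:ℤ) v))) := by
    intro j hj
    simp only [Finset.mem_range] at hj
    rw [resProd_apply]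
    apply finsum_eq_sum_of_support_subset
    intro l hl
    simp only [Function.mem_support, ne_eq] at hl
    simp only [Finset.coe_range, Set.mem_Iio]
    by_contra hcon
    push_neg at hcon
    apply hl
    rw [hN4 j (by omega) ((p:ℤ) + n - j + l) (by omega), hBzero,
        hN3 j (by omega) (l:ℤ) (by omega), hCzero]
    simp
  -- expansion of U
  have hU : resProd A (resProd B C q) (p:ℤ) n v
      = ((∑ j ∈ range (p+1), ∑ l ∈ range NN,
            ((-1:ℤ)^j * (p.choose j : ℤ) * ((-1:ℤ)^l * ichoose q l)) •
              A ((p:ℤ) - j) (B (q - l) (C (n + (j:ℤ) + l) v)))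
          - ∑ j ∈ range (p+1), ∑ l ∈ range NN,
            ((-1:ℤ)^j * (p.choose j : ℤ) * ((-1:ℤ)^l * ichoose q l) * msign q) •
              A ((p:ℤ) - j) (C (q + (n + (j:ℤ)) - l) (B (l:ℤ) v)))
        - ((∑ j ∈ range (p+1), ∑ l ∈ range NN,
            ((-1:ℤ)^j * (p.choose j : ℤ) * (-1:ℤ)^p * ((-1:ℤ)^l * ichoose q l)) •
              B (q - l) (C ((p:ℤ) + n - j + l) (A (j:ℤ) v)))
          - ∑ j ∈ range (p+1), ∑ l ∈ range NN,
            ((-1:ℤ)^j * (p.choose j : ℤ) * (-1:ℤ)^p * ((-1:ℤ)^l * ichoose q l) * msign q) •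
              C (q + ((p:ℤ) + n - j) - l) (B (l:ℤ) (A (j:ℤ) v))) := by
    rw [resProd_coe A (resProd B C q) p n v]
    conv_rhs => rw [← Finset.sum_sub_distrib, ← Finset.sum_sub_distrib, ← Finset.sum_sub_distrib]
    refine Finset.sum_congr rfl fun j hj => ?_
    rw [hBC1 j hj, hBC2 j hj, hAsum]
    have e2 : ∀ l ∈ range NN,
        A ((p:ℤ) - j) (((-1:ℤ)^l * ichoose q l) •
          (B (q - l) (C (n + (j:ℤ) + l) v) - msign q • C (q + (n + (j:ℤ)) - l) (B (l:ℤ) v)))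
        = ((-1:ℤ)^l * ichoose q l) • A ((p:ℤ) - j) (B (q - l) (C (n + (j:ℤ) + l) v))
          - ((-1:ℤ)^l * ichoose q l * msign q) •
              A ((p:ℤ) - j) (C (q + (n + (j:ℤ)) - l) (B (l:ℤ) v)) := by
      intro l hl
      rw [hAsmul, hAsub, hAsmul]
      module
    rw [Finset.sum_congr rfl e2, Finset.sum_sub_distrib]
    have e3 : ∀ l ∈ range NN,
        ((-1:ℤ)^l * ichoose q l) •
          (B (q - l) (C ((p:ℤ) + n - j + l) (A (j:ℤ) v))
            - msign q • C (q + ((p:ℤ) + n - j) - l) (B (l:ℤ) (A (j:ℤ) v)))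
        = ((-1:ℤ)^l * ichoose q l) • B (q - l) (C ((p:ℤ) + n - j + l) (A (j:ℤ) v))
          - ((-1:ℤ)^l * ichoose q l * msign q) •
              C (q + ((p:ℤ) + n - j) - l) (B (l:ℤ) (A (j:ℤ) v)) := by
      intro l hl
      module
    rw [Finset.sum_congr rfl e3, Finset.sum_sub_distrib]
    have e4 : ∑ l ∈ range NN, ((-1:ℤ)^j * (p.choose j : ℤ) * ((-1:ℤ)^l * ichoose q l)) •
          A ((p:ℤ) - j) (B (q - l) (C (n + (j:ℤ) + l) v))
        = ((-1:ℤ)^j * (p.choose j : ℤ)) • ∑ l ∈ range NN, ((-1:ℤ)^l * ichoose q l) •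
            A ((p:ℤ) - j) (B (q - l) (C (n + (j:ℤ) + l) v)) := by
      rw [Finset.smul_sum]
      exact Finset.sum_congr rfl fun l hl => by module
    have e5 : ∑ l ∈ range NN, ((-1:ℤ)^j * (p.choose j : ℤ) * ((-1:ℤ)^l * ichoose q l) * msign q) •
          A ((p:ℤ) - j) (C (q + (n + (j:ℤ)) - l) (B (l:ℤ) v))
        = ((-1:ℤ)^j * (p.choose j : ℤ)) • ∑ l ∈ range NN, ((-1:ℤ)^l * ichoose q l * msign q) •
            A ((p:ℤ) - j) (C (q + (n + (j:ℤ)) - l) (B (l:ℤ) v)) := by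
      rw [Finset.smul_sum]
      exact Finset.sum_congr rfl fun l hl => by module
    have e6 : ∑ l ∈ range NN, ((-1:ℤ)^j * (p.choose j : ℤ) * (-1:ℤ)^p * ((-1:ℤ)^l * ichoose q l)) •
          B (q - l) (C ((p:ℤ) + n - j + l) (A (j:ℤ) v))
        = ((-1:ℤ)^j * (p.choose j : ℤ) * (-1:ℤ)^p) • ∑ l ∈ range NN, ((-1:ℤ)^l * ichoose q l) •
            B (q - l) (C ((p:ℤ) + n - j + l) (A (j:ℤ) v)) := by
      rw [Finset.smul_sum]
      exact Finset.sum_congr rfl fun l hl => by module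
    have e7 : ∑ l ∈ range NN, ((-1:ℤ)^j * (p.choose j : ℤ) * (-1:ℤ)^p * ((-1:ℤ)^l * ichoose q l) * msign q) •
          C (q + ((p:ℤ) + n - j) - l) (B (l:ℤ) (A (j:ℤ) v))
        = ((-1:ℤ)^j * (p.choose j : ℤ) * (-1:ℤ)^p) • ∑ l ∈ range NN, ((-1:ℤ)^l * ichoose q l * msign q) •
            C (q + ((p:ℤ) + n - j) - l) (B (l:ℤ) (A (j:ℤ) v)) := by
      rw [Finset.smul_sum]
      exact Finset.sum_congr rfl fun l hl => by module
    rw [e4, e5, e6, e7]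
    module
  -- expansion of V
  have hV : resProd B (resProd A C (p:ℤ)) q n v
      = ((∑ j ∈ range NN, ∑ l ∈ range (p+1),
            ((-1:ℤ)^j * ichoose q j * ((-1:ℤ)^l * (p.choose l : ℤ))) •
              B (q - j) (A ((p:ℤ) - l) (C (n + (j:ℤ) + l) v)))
          - ∑ j ∈ range NN, ∑ l ∈ range (p+1),
            ((-1:ℤ)^j * ichoose q j * ((-1:ℤ)^l * (p.choose l : ℤ)) * (-1:ℤ)^p) •
              B (q - j) (C ((p:ℤ) + (n + (j:ℤ)) - l) (A (l:ℤ) v)))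
        - ((∑ j ∈ range NN, ∑ l ∈ range (p+1),
            ((-1:ℤ)^j * ichoose q j * msign q * ((-1:ℤ)^l * (p.choose l : ℤ))) •
              A ((p:ℤ) - l) (C (q + n - (j:ℤ) + l) (B (j:ℤ) v)))
          - ∑ j ∈ range NN, ∑ l ∈ range (p+1),
            ((-1:ℤ)^j * ichoose q j * msign q * ((-1:ℤ)^l * (p.choose l : ℤ)) * (-1:ℤ)^p) •
              C ((p:ℤ) + (q + n - (j:ℤ)) - l) (A (l:ℤ) (B (j:ℤ) v))) := by
    rw [resProd_apply B (resProd A C (p:ℤ)) q n v]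
    rw [finsum_eq_sum_of_support_subset _ (s := range NN) ?_]
    swap
    · intro j hj
      simp only [Function.mem_support, ne_eq] at hj
      simp only [Finset.coe_range, Set.mem_Iio]
      by_contra hcon
      push_neg at hcon
      apply hj
      rw [hACv (n + (j:ℤ)) (by omega), hBzero,
          hN2 (j:ℤ) (by exact_mod_cast Nat.cast_le.2 hcon), resProd_zero A C hlA hlC]
      simp
    conv_rhs => rw [← Finset.sum_sub_distrib, ← Finset.sum_sub_distrib, ← Finset.sum_sub_distrib]
    refine Finset.sum_congr rfl fun j hj => ?_
    rw [resProd_coe A C p (n + (j:ℤ)) v, resProd_coe A C p (q + n - (j:ℤ)) (B (j:ℤ) v), hBsum]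
    have e2 : ∀ l ∈ range (p+1),
        B (q - j) (((-1:ℤ)^l * (p.choose l : ℤ)) •
          (A ((p:ℤ) - l) (C (n + (j:ℤ) + l) v) - (-1:ℤ)^p • C ((p:ℤ) + (n + (j:ℤ)) - l) (A (l:ℤ) v)))
        = ((-1:ℤ)^l * (p.choose l : ℤ)) • B (q - j) (A ((p:ℤ) - l) (C (n + (j:ℤ) + l) v))
          - ((-1:ℤ)^l * (p.choose l : ℤ) * (-1:ℤ)^p) •
              B (q - j) (C ((p:ℤ) + (n + (j:ℤ)) - l) (A (l:ℤ) v)) := by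
      intro l hl
      rw [hBsmul, hBsub, hBsmul]
      module
    rw [Finset.sum_congr rfl e2, Finset.sum_sub_distrib]
    have e3 : ∀ l ∈ range (p+1),
        ((-1:ℤ)^l * (p.choose l : ℤ)) •
          (A ((p:ℤ) - l) (C (q + n - (j:ℤ) + l) (B (j:ℤ) v))
            - (-1:ℤ)^p • C ((p:ℤ) + (q + n - (j:ℤ)) - l) (A (l:ℤ) (B (j:ℤ) v)))
        = ((-1:ℤ)^l * (p.choose l : ℤ)) • A ((p:ℤ) - l) (C (q + n - (j:ℤ) + l) (B (j:ℤ) v))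
          - ((-1:ℤ)^l * (p.choose l : ℤ) * (-1:ℤ)^p) •
              C ((p:ℤ) + (q + n - (j:ℤ)) - l) (A (l:ℤ) (B (j:ℤ) v)) := by
      intro l hl
      module
    rw [Finset.sum_congr rfl e3, Finset.sum_sub_distrib]
    have e4 : ∑ l ∈ range (p+1), ((-1:ℤ)^j * ichoose q j * ((-1:ℤ)^l * (p.choose l : ℤ))) •
          B (q - j) (A ((p:ℤ) - l) (C (n + (j:ℤ) + l) v))
        = ((-1:ℤ)^j * ichoose q j) • ∑ l ∈ range (p+1), ((-1:ℤ)^l * (p.choose l : ℤ)) •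
            B (q - j) (A ((p:ℤ) - l) (C (n + (j:ℤ) + l) v)) := by
      rw [Finset.smul_sum]
      exact Finset.sum_congr rfl fun l hl => by module
    have e5 : ∑ l ∈ range (p+1), ((-1:ℤ)^j * ichoose q j * ((-1:ℤ)^l * (p.choose l : ℤ)) * (-1:ℤ)^p) •
          B (q - j) (C ((p:ℤ) + (n + (j:ℤ)) - l) (A (l:ℤ) v))
        = ((-1:ℤ)^j * ichoose q j) • ∑ l ∈ range (p+1), ((-1:ℤ)^l * (p.choose l : ℤ) * (-1:ℤ)^p) •
            B (q - j) (C ((p:ℤ) + (n + (j:ℤ)) - l) (A (l:ℤ) v)) := by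
      rw [Finset.smul_sum]
      exact Finset.sum_congr rfl fun l hl => by module
    have e6 : ∑ l ∈ range (p+1), ((-1:ℤ)^j * ichoose q j * msign q * ((-1:ℤ)^l * (p.choose l : ℤ))) •
          A ((p:ℤ) - l) (C (q + n - (j:ℤ) + l) (B (j:ℤ) v))
        = ((-1:ℤ)^j * ichoose q j * msign q) • ∑ l ∈ range (p+1), ((-1:ℤ)^l * (p.choose l : ℤ)) •
            A ((p:ℤ) - l) (C (q + n - (j:ℤ) + l) (B (j:ℤ) v)) := by
      rw [Finset.smul_sum]
      exact Finset.sum_congr rfl fun l hl => by module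
    have e7 : ∑ l ∈ range (p+1), ((-1:ℤ)^j * ichoose q j * msign q * ((-1:ℤ)^l * (p.choose l : ℤ)) * (-1:ℤ)^p) •
          C ((p:ℤ) + (q + n - (j:ℤ)) - l) (A (l:ℤ) (B (j:ℤ) v))
        = ((-1:ℤ)^j * ichoose q j * msign q) • ∑ l ∈ range (p+1), ((-1:ℤ)^l * (p.choose l : ℤ) * (-1:ℤ)^p) •
            C ((p:ℤ) + (q + n - (j:ℤ)) - l) (A (l:ℤ) (B (j:ℤ) v)) := by
      rw [Finset.smul_sum]
      exact Finset.sum_congr rfl fun l hl => by module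
    rw [e4, e5, e6, e7]
    module
  -- matchers
  have hm1 : ∑ j ∈ range (p+1), ∑ l ∈ range NN,
        ((-1:ℤ)^j * (p.choose j : ℤ) * ((-1:ℤ)^l * ichoose q l)) •
          A ((p:ℤ) - j) (B (q - l) (C (n + (j:ℤ) + l) v))
      = ∑ j ∈ range NN, ∑ a ∈ range (p + 1),
          ((-1:ℤ)^a * (p.choose a : ℤ) * msign ((j:ℤ) - a) * ich q ((j:ℤ) - a)) •
            A ((p:ℤ) - a) (B (q - j + a) (C (n + j) v)) := by
    conv_rhs => rw [Finset.sum_comm]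
    refine Finset.sum_congr rfl fun a ha => ?_
    simp only [Finset.mem_range] at ha
    set f : ℕ → M := fun K =>
      ((-1:ℤ)^a * (p.choose a : ℤ) * msign ((K:ℤ) - a) * ich q ((K:ℤ) - a)) •
        A ((p:ℤ) - a) (B (q - K + a) (C (n + K) v)) with hf
    have hsh : ∀ l ∈ range NN,
        ((-1:ℤ)^a * (p.choose a : ℤ) * ((-1:ℤ)^l * ichoose q l)) •
          A ((p:ℤ) - a) (B (q - l) (C (n + (a:ℤ) + l) v)) = f (a + l) := by
      intro l hl
      simp only [hf]
      have e1 : ((a + l : ℕ):ℤ) - a = (l:ℤ) := by push_cast; ring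
      have e2 : q - ((a + l : ℕ):ℤ) + a = q - l := by push_cast; ring
      have e3 : n + ((a + l : ℕ):ℤ) = n + (a:ℤ) + l := by push_cast; ring
      rw [e1, e2, e3]
      congr 1
      rw [ich_coe, msign_natCast]
      ring
    rw [Finset.sum_congr rfl hsh, shift_sum a NN f ?_ ?_]
    · intro K hK
      simp only [hf]
      rw [ich_neg (by omega : (K:ℤ) - a < 0)]
      simp
    · intro K hK
      simp only [hf]
      rw [hN1 (n + (K:ℤ)) (by omega), hBzero, hAzero]
      simp
  have hm2 : ∑ j ∈ range NN, ∑ l ∈ range (p+1),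
        ((-1:ℤ)^j * ichoose q j * ((-1:ℤ)^l * (p.choose l : ℤ))) •
          B (q - j) (A ((p:ℤ) - l) (C (n + (j:ℤ) + l) v))
      = ∑ j ∈ range NN, ∑ a ∈ range (p + 1),
          ((-1:ℤ)^a * (p.choose a : ℤ) * msign ((j:ℤ) - a) * ich q ((j:ℤ) - a)) •
            B (q - j + a) (A ((p:ℤ) - a) (C (n + j) v)) := by
    rw [Finset.sum_comm]
    conv_rhs => rw [Finset.sum_comm]
    refine Finset.sum_congr rfl fun a ha => ?_
    simp only [Finset.mem_range] at ha
    set f : ℕ → M := fun K =>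
      ((-1:ℤ)^a * (p.choose a : ℤ) * msign ((K:ℤ) - a) * ich q ((K:ℤ) - a)) •
        B (q - K + a) (A ((p:ℤ) - a) (C (n + K) v)) with hf
    have hsh : ∀ j ∈ range NN,
        ((-1:ℤ)^j * ichoose q j * ((-1:ℤ)^a * (p.choose a : ℤ))) •
          B (q - j) (A ((p:ℤ) - a) (C (n + (j:ℤ) + a) v)) = f (a + j) := by
      intro j hj
      simp only [hf]
      have e1 : ((a + j : ℕ):ℤ) - a = (j:ℤ) := by push_cast; ring
      have e2 : q - ((a + j : ℕ):ℤ) + a = q - j := by push_cast; ring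
      have e3 : n + ((a + j : ℕ):ℤ) = n + (j:ℤ) + a := by push_cast; ring
      rw [e1, e2, e3]
      congr 1
      rw [ich_coe, msign_natCast]
      ring
    rw [Finset.sum_congr rfl hsh, shift_sum a NN f ?_ ?_]
    · intro K hK
      simp only [hf]
      rw [ich_neg (by omega : (K:ℤ) - a < 0)]
      simp
    · intro K hK
      simp only [hf]
      rw [hN1 (n + (K:ℤ)) (by omega), hAzero, hBzero]
      simp
  have hmsadd : msign ((p:ℤ) + q) = (-1:ℤ)^p * msign q := by
    rw [msign_add, msign_natCast]
  have hm3 : ∑ j ∈ range (p+1), ∑ l ∈ range NN,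
        ((-1:ℤ)^j * (p.choose j : ℤ) * (-1:ℤ)^p * ((-1:ℤ)^l * ichoose q l) * msign q) •
          C (q + ((p:ℤ) + n - j) - l) (B (l:ℤ) (A (j:ℤ) v))
      = ∑ kk ∈ range (NN + p + 1), ∑ a ∈ range (p + 1),
          (msign ((p:ℤ) + q) * ((-1:ℤ)^a * (p.choose a : ℤ) * msign ((kk:ℤ) - a) * ich q ((kk:ℤ) - a))) •
            C ((p:ℤ) + q + n - kk) (B ((kk:ℤ) - a) (A (a:ℤ) v)) := by
    conv_rhs => rw [Finset.sum_comm]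
    refine Finset.sum_congr rfl fun a ha => ?_
    simp only [Finset.mem_range] at ha
    set f : ℕ → M := fun K =>
      (msign ((p:ℤ) + q) * ((-1:ℤ)^a * (p.choose a : ℤ) * msign ((K:ℤ) - a) * ich q ((K:ℤ) - a))) •
        C ((p:ℤ) + q + n - K) (B ((K:ℤ) - a) (A (a:ℤ) v)) with hf
    have hsh : ∀ l : ℕ,
        ((-1:ℤ)^a * (p.choose a : ℤ) * (-1:ℤ)^p * ((-1:ℤ)^l * ichoose q l) * msign q) •
          C (q + ((p:ℤ) + n - a) - l) (B (l:ℤ) (A (a:ℤ) v)) = f (a + l) := by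
      intro l
      simp only [hf]
      have e1 : ((a + l : ℕ):ℤ) - a = (l:ℤ) := by push_cast; ring
      have e2 : (p:ℤ) + q + n - ((a + l : ℕ):ℤ) = q + ((p:ℤ) + n - a) - l := by push_cast; ring
      rw [e1, e2]
      congr 1
      rw [ich_coe, msign_natCast, hmsadd]
      ring
    have hext : ∑ l ∈ range NN,
        ((-1:ℤ)^a * (p.choose a : ℤ) * (-1:ℤ)^p * ((-1:ℤ)^l * ichoose q l) * msign q) •
          C (q + ((p:ℤ) + n - a) - l) (B (l:ℤ) (A (a:ℤ) v))
        = ∑ l ∈ range (NN + p + 1),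
        ((-1:ℤ)^a * (p.choose a : ℤ) * (-1:ℤ)^p * ((-1:ℤ)^l * ichoose q l) * msign q) •
          C (q + ((p:ℤ) + n - a) - l) (B (l:ℤ) (A (a:ℤ) v)) := by
      apply Finset.sum_subset
      · intro x hx; simp only [Finset.mem_range] at *; omega
      · intro x hx hx2
        simp only [Finset.mem_range, not_lt] at hx hx2
        rw [hN3 a (by omega) (x:ℤ) (by omega), hCzero]
        simp
    rw [hext, Finset.sum_congr rfl (fun l _ => hsh l), shift_sum a (NN + p + 1) f ?_ ?_]
    · intro K hK
      simp only [hf]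
      rw [ich_neg (by omega : (K:ℤ) - a < 0)]
      simp
    · intro K hK
      simp only [hf]
      rw [hN3 a (by omega) ((K:ℤ) - a) (by omega), hCzero]
      simp
  have hm4 : ∑ j ∈ range NN, ∑ l ∈ range (p+1),
        ((-1:ℤ)^j * ichoose q j * msign q * ((-1:ℤ)^l * (p.choose l : ℤ)) * (-1:ℤ)^p) •
          C ((p:ℤ) + (q + n - (j:ℤ)) - l) (A (l:ℤ) (B (j:ℤ) v))
      = ∑ kk ∈ range (NN + p + 1), ∑ a ∈ range (p + 1),
          (msign ((p:ℤ) + q) * ((-1:ℤ)^a * (p.choose a : ℤ) * msign ((kk:ℤ) - a) * ich q ((kk:ℤ) - a))) •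
            C ((p:ℤ) + q + n - kk) (A (a:ℤ) (B ((kk:ℤ) - a) v)) := by
    rw [Finset.sum_comm]
    conv_rhs => rw [Finset.sum_comm]
    refine Finset.sum_congr rfl fun a ha => ?_
    simp only [Finset.mem_range] at ha
    set f : ℕ → M := fun K =>
      (msign ((p:ℤ) + q) * ((-1:ℤ)^a * (p.choose a : ℤ) * msign ((K:ℤ) - a) * ich q ((K:ℤ) - a))) •
        C ((p:ℤ) + q + n - K) (A (a:ℤ) (B ((K:ℤ) - a) v)) with hf
    have hsh : ∀ j : ℕ,
        ((-1:ℤ)^j * ichoose q j * msign q * ((-1:ℤ)^a * (p.choose a : ℤ)) * (-1:ℤ)^p) •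
          C ((p:ℤ) + (q + n - (j:ℤ)) - a) (A (a:ℤ) (B (j:ℤ) v)) = f (a + j) := by
      intro j
      simp only [hf]
      have e1 : ((a + j : ℕ):ℤ) - a = (j:ℤ) := by push_cast; ring
      have e2 : (p:ℤ) + q + n - ((a + j : ℕ):ℤ) = (p:ℤ) + (q + n - (j:ℤ)) - a := by push_cast; ring
      rw [e1, e2]
      congr 1
      rw [ich_coe, msign_natCast, hmsadd]
      ring
    have hext : ∑ j ∈ range NN,
        ((-1:ℤ)^j * ichoose q j * msign q * ((-1:ℤ)^a * (p.choose a : ℤ)) * (-1:ℤ)^p) •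
          C ((p:ℤ) + (q + n - (j:ℤ)) - a) (A (a:ℤ) (B (j:ℤ) v))
        = ∑ j ∈ range (NN + p + 1),
        ((-1:ℤ)^j * ichoose q j * msign q * ((-1:ℤ)^a * (p.choose a : ℤ)) * (-1:ℤ)^p) •
          C ((p:ℤ) + (q + n - (j:ℤ)) - a) (A (a:ℤ) (B (j:ℤ) v)) := by
      apply Finset.sum_subset
      · intro x hx; simp only [Finset.mem_range] at *; omega
      · intro x hx hx2
        simp only [Finset.mem_range, not_lt] at hx hx2
        rw [hN2 (x:ℤ) (by omega), hAzero, hCzero]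
        simp
    rw [hext, Finset.sum_congr rfl (fun j _ => hsh j), shift_sum a (NN + p + 1) f ?_ ?_]
    · intro K hK
      simp only [hf]
      rw [ich_neg (by omega : (K:ℤ) - a < 0)]
      simp
    · intro K hK
      simp only [hf]
      rw [hN2 ((K:ℤ) - a) (by omega), hAzero, hCzero]
      simp
  have hc1 : ∑ j ∈ range (p+1), ∑ l ∈ range NN,
        ((-1:ℤ)^j * (p.choose j : ℤ) * ((-1:ℤ)^l * ichoose q l) * msign q) •
          A ((p:ℤ) - j) (C (q + (n + (j:ℤ)) - l) (B (l:ℤ) v))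
      = ∑ j ∈ range NN, ∑ l ∈ range (p+1),
        ((-1:ℤ)^j * ichoose q j * msign q * ((-1:ℤ)^l * (p.choose l : ℤ))) •
          A ((p:ℤ) - l) (C (q + n - (j:ℤ) + l) (B (j:ℤ) v)) := by
    conv_rhs => rw [Finset.sum_comm]
    refine Finset.sum_congr rfl fun x hx => Finset.sum_congr rfl fun y hy => ?_
    have harg : q + n - (y:ℤ) + x = q + (n + (x:ℤ)) - y := by ring
    rw [harg]
    congr 1
    ring
  have hc2 : ∑ j ∈ range (p+1), ∑ l ∈ range NN,
        ((-1:ℤ)^j * (p.choose j : ℤ) * (-1:ℤ)^p * ((-1:ℤ)^l * ichoose q l)) •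
          B (q - l) (C ((p:ℤ) + n - j + l) (A (j:ℤ) v))
      = ∑ j ∈ range NN, ∑ l ∈ range (p+1),
        ((-1:ℤ)^j * ichoose q j * ((-1:ℤ)^l * (p.choose l : ℤ)) * (-1:ℤ)^p) •
          B (q - j) (C ((p:ℤ) + (n + (j:ℤ)) - l) (A (l:ℤ) v)) := by
    conv_rhs => rw [Finset.sum_comm]
    refine Finset.sum_congr rfl fun x hx => Finset.sum_congr rfl fun y hy => ?_
    have harg : (p:ℤ) + (n + (y:ℤ)) - x = (p:ℤ) + n - x + y := by ring
    rw [harg]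
    congr 1
    ring
  rw [hU, hV, hm1, hm2, hm3, hm4, hc1, hc2]
  abel

lemma EE (A B C : Ser M) (hB : IsFieldSer B) (hC : IsFieldSer C)
    (hlA : IsLinSer (k := k) A) (hlB : IsLinSer (k := k) B) (hlC : IsLinSer (k := k) C)
    (r : ℕ) : ∀ (p : ℕ) (q n : ℤ) (v : M),
    ∑ i ∈ range (p + 1), (p.choose i : ℤ) • resProd (resProd A B ((r:ℤ) + i)) C ((p:ℤ) + q - i) n v
      = ∑ i ∈ range (r + 1), ((-1:ℤ)^i * (r.choose i : ℤ)) •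
          (resProd A (resProd B C (q + i)) ((p:ℤ) + r - i) n v
            - (-1:ℤ)^r • resProd B (resProd A C ((p:ℤ) + i)) (q + (r:ℤ) - i) n v) := by
  induction r with
  | zero =>
    intro p q n v
    rw [Finset.sum_range_one]
    simp only [Nat.cast_zero, zero_add, add_zero, sub_zero, pow_zero, one_smul,
      Nat.choose_zero_right, Nat.cast_one, one_mul]
    exact CF A B C hB hC hlA hlB hlC p q n v
  | succ r IH =>
    intro p q n v
    have hP := pascal_smul_sum p
      (fun i => resProd (resProd A B ((r:ℤ) + i)) C (((p+1:ℕ):ℤ) + q - i) n v)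
    have e1 : ∑ i ∈ range (p+1), (p.choose i:ℤ) •
          resProd (resProd A B ((r:ℤ) + i)) C (((p+1:ℕ):ℤ) + q - i) n v
        = ∑ i ∈ range (p+1), (p.choose i:ℤ) •
            resProd (resProd A B ((r:ℤ) + i)) C ((p:ℤ) + (q+1) - i) n v := by
      refine Finset.sum_congr rfl fun i hi => ?_
      rw [show (((p+1:ℕ):ℤ) + q - (i:ℤ)) = ((p:ℤ) + (q+1) - i) from by push_cast; ring]
    have e2 : ∑ i ∈ range (p+1), (p.choose i:ℤ) •
          resProd (resProd A B ((r:ℤ) + ((i+1:ℕ):ℤ))) C (((p+1:ℕ):ℤ) + q - ((i+1:ℕ):ℤ)) n v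
        = ∑ i ∈ range (p+1), (p.choose i:ℤ) •
            resProd (resProd A B (((r+1:ℕ):ℤ) + i)) C ((p:ℤ) + q - i) n v := by
      refine Finset.sum_congr rfl fun i hi => ?_
      rw [show ((r:ℤ) + ((i+1:ℕ):ℤ)) = (((r+1:ℕ):ℤ) + (i:ℤ)) from by push_cast; ring,
          show (((p+1:ℕ):ℤ) + q - ((i+1:ℕ):ℤ)) = ((p:ℤ) + q - i) from by push_cast; ring]
    have hLrec : ∑ i ∈ range (p + 1), (p.choose i : ℤ) •
          resProd (resProd A B (((r+1:ℕ):ℤ) + i)) C ((p:ℤ) + q - i) n v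
        = (∑ i ∈ range (p + 1 + 1), ((p+1).choose i : ℤ) •
            resProd (resProd A B ((r:ℤ) + i)) C (((p+1:ℕ):ℤ) + q - i) n v)
          - ∑ i ∈ range (p + 1), (p.choose i : ℤ) •
              resProd (resProd A B ((r:ℤ) + i)) C ((p:ℤ) + (q+1) - i) n v := by
      rw [show p + 1 + 1 = p + 2 from rfl, hP, e1, e2]
      abel
    rw [hLrec, IH (p+1) q n v, IH p (q+1) n v]
    have ec : ∀ i ∈ range (r+1+1),
        ((-1:ℤ)^i * ((r+1).choose i : ℤ)) •
          (resProd A (resProd B C (q + i)) ((p:ℤ) + ((r+1:ℕ):ℤ) - i) n v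
            - (-1:ℤ)^(r+1) • resProd B (resProd A C ((p:ℤ) + i)) (q + ((r+1:ℕ):ℤ) - i) n v)
        = ((r+1).choose i : ℤ) • ((-1:ℤ)^i •
          (resProd A (resProd B C (q + i)) ((p:ℤ) + ((r+1:ℕ):ℤ) - i) n v
            - (-1:ℤ)^(r+1) • resProd B (resProd A C ((p:ℤ) + i)) (q + ((r+1:ℕ):ℤ) - i) n v)) := by
      intro i hi
      module
    rw [Finset.sum_congr rfl ec,
        show r + 1 + 1 = r + 2 from rfl,
        pascal_smul_sum r (fun i => (-1:ℤ)^i •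
          (resProd A (resProd B C (q + i)) ((p:ℤ) + ((r+1:ℕ):ℤ) - i) n v
            - (-1:ℤ)^(r+1) • resProd B (resProd A C ((p:ℤ) + i)) (q + ((r+1:ℕ):ℤ) - i) n v))]
    rw [← Finset.sum_sub_distrib, ← Finset.sum_add_distrib]
    refine Finset.sum_congr rfl fun i hi => ?_
    rw [show ((p:ℤ) + ((r+1:ℕ):ℤ) - (i:ℤ)) = (((p+1:ℕ):ℤ) + (r:ℤ) - i) from by push_cast; ring,
        show (q + ((r+1:ℕ):ℤ) - (i:ℤ)) = (q + 1 + (r:ℤ) - i) from by push_cast; ring,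
        show (q + ((i+1:ℕ):ℤ)) = (q + 1 + (i:ℤ)) from by push_cast; ring,
        show ((p:ℤ) + ((r+1:ℕ):ℤ) - ((i+1:ℕ):ℤ)) = ((p:ℤ) + (r:ℤ) - i) from by push_cast; ring,
        show ((p:ℤ) + ((i+1:ℕ):ℤ)) = (((p+1:ℕ):ℤ) + (i:ℤ)) from by push_cast; ring,
        show (q + ((r+1:ℕ):ℤ) - ((i+1:ℕ):ℤ)) = (q + (r:ℤ) - i) from by push_cast; ring]
    module

/-- Borcherds identity for arbitrary (not necessarily local) fields, for nonnegative
`p` and `r` and arbitrary `q`. -/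
theorem stmt13 (A B C : Ser M)
    (hA : IsFieldSer A) (hB : IsFieldSer B) (hC : IsFieldSer C)
    (hlA : IsLinSer (k := k) A) (hlB : IsLinSer (k := k) B) (hlC : IsLinSer (k := k) C)
    (p q r : ℤ) (hp : 0 ≤ p) (hr : 0 ≤ r) (n : ℤ) (v : M) :
    ∑ᶠ i : ℕ, ichoose p i • resProd (resProd A B (r + i)) C (p + q - i) n v
      = ∑ᶠ i : ℕ, ((-1 : ℤ) ^ i * ichoose r i) •
          (resProd A (resProd B C (q + i)) (p + r - i) n v
            - msign r • resProd B (resProd A C (p + i)) (q + r - i) n v) := by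
  lift p to ℕ using hp with p' hp'
  lift r to ℕ using hr with r' hr'
  have hLt : ∑ᶠ i : ℕ, ichoose (p':ℤ) i • resProd (resProd A B ((r':ℤ) + i)) C ((p':ℤ) + q - i) n v
      = ∑ i ∈ range (p' + 1), ichoose (p':ℤ) i •
          resProd (resProd A B ((r':ℤ) + i)) C ((p':ℤ) + q - i) n v := by
    apply finsum_eq_sum_of_support_subset
    intro i hi
    simp only [Function.mem_support, ne_eq] at hi
    simp only [Finset.coe_range, Set.mem_Iio]
    by_contra hcon
    push_neg at hcon
    exact hi (by rw [ichoose_natCast_eq_zero (by omega)]; simp)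
  have hRt : ∑ᶠ i : ℕ, ((-1 : ℤ) ^ i * ichoose (r':ℤ) i) •
        (resProd A (resProd B C (q + i)) ((p':ℤ) + r' - i) n v
          - msign (r':ℤ) • resProd B (resProd A C ((p':ℤ) + i)) (q + (r':ℤ) - i) n v)
      = ∑ i ∈ range (r' + 1), ((-1 : ℤ) ^ i * ichoose (r':ℤ) i) •
        (resProd A (resProd B C (q + i)) ((p':ℤ) + r' - i) n v
          - msign (r':ℤ) • resProd B (resProd A C ((p':ℤ) + i)) (q + (r':ℤ) - i) n v) := by
    apply finsum_eq_sum_of_support_subset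
    intro i hi
    simp only [Function.mem_support, ne_eq] at hi
    simp only [Finset.coe_range, Set.mem_Iio]
    by_contra hcon
    push_neg at hcon
    exact hi (by rw [ichoose_natCast_eq_zero (by omega)]; simp)
  rw [hLt, hRt]
  have eL : ∀ i ∈ range (p' + 1), ichoose (p':ℤ) i •
        resProd (resProd A B ((r':ℤ) + i)) C ((p':ℤ) + q - i) n v
      = (p'.choose i : ℤ) • resProd (resProd A B ((r':ℤ) + i)) C ((p':ℤ) + q - i) n v := by
    intro i hi
    rw [ichoose_natCast]
  have eR : ∀ i ∈ range (r' + 1), ((-1 : ℤ) ^ i * ichoose (r':ℤ) i) •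
        (resProd A (resProd B C (q + i)) ((p':ℤ) + r' - i) n v
          - msign (r':ℤ) • resProd B (resProd A C ((p':ℤ) + i)) (q + (r':ℤ) - i) n v)
      = ((-1 : ℤ) ^ i * (r'.choose i : ℤ)) •
        (resProd A (resProd B C (q + i)) ((p':ℤ) + r' - i) n v
          - (-1:ℤ)^r' • resProd B (resProd A C ((p':ℤ) + i)) (q + (r':ℤ) - i) n v) := by
    intro i hi
    rw [ichoose_natCast, msign_natCast]
  rw [Finset.sum_congr rfl eL, Finset.sum_congr rfl eR]
  exact EE A B C hB hC hlA hlB hlC r' p' q n v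


end VA
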